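/- arXiv:2007.04261 — 8 statements merged into one kernel-verified Lean document; each statement's English description precedes it below -/
import Mathlib

section
/- Let d, c, n be natural numbers with 1 ≤ c ≤ d, n ≥ 1 and d dividing n. Then there exists a finite set V with |V| = n and a hereditary family 𝓕 of subsets of V with d·(|𝓕| − 1) = n·(2^d − c) such that for every x ∈ V one has |𝓕_x| < |𝓕| − (2^{d−1} − c). In particular, m(n, 2^{d−1} − c) ≤ n(2^d − c)/d. -/
/-- A family of finite sets is hereditary if it is closed under taking subsets. -/
def Hereditary {α : Type*} [DecidableEq α] (𝓕 : Finset (Finset α)) : Prop :=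
  ∀ F ∈ 𝓕, ∀ F' ⊆ F, F' ∈ 𝓕

/-- The trace of a family `𝓕` at a vertex `x`: the family `{F \ {x} : F ∈ 𝓕}`. -/
def traceAt {α : Type*} [DecidableEq α] (𝓕 : Finset (Finset α)) (x : α) :
    Finset (Finset α) :=
  𝓕.image fun F => F.erase x

namespace TraceAux
open Finset

/-- The set of bit indices of `v`. -/
def B (v : ℕ) : Finset ℕ := v.bitIndices.toFinset

lemma sum_B (v : ℕ) : ∑ j ∈ B v, 2 ^ j = v := Finset.twoPowSum_toFinset_bitIndices v

lemma B_sum (G : Finset ℕ) : B (∑ j ∈ G, 2 ^ j) = G := Finset.toFinset_bitIndices_twoPowSum G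

lemma sum_inj : Function.Injective (fun G : Finset ℕ => ∑ j ∈ G, 2 ^ j) :=
  Function.LeftInverse.injective B_sum

lemma B_subset_range {v d : ℕ} (hv : v < 2 ^ d) : B v ⊆ range d := by
  intro j hj
  rw [B, List.mem_toFinset] at hj
  have h1 : 2 ^ j ≤ v := Nat.two_pow_le_of_mem_bitIndices hj
  rw [mem_range]
  by_contra h
  exact absurd (le_trans (Nat.pow_le_pow_right (by norm_num) (le_of_not_gt h)) h1)
    (not_le.mpr hv)

lemma B_nonempty {v : ℕ} (hv : 1 ≤ v) : (B v).Nonempty := by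
  rcases (B v).eq_empty_or_nonempty with h | h
  · have := sum_B v
    rw [h] at this
    simp at this
    omega
  · exact h

lemma sum_range_two_pow (m : ℕ) : ∑ j ∈ range m, 2 ^ j = 2 ^ m - 1 := by
  induction m with
  | zero => simp
  | succ m ih =>
    rw [Finset.sum_range_succ, ih, pow_succ]
    have := Nat.one_le_two_pow (n := m)
    omega

lemma block_eq {d i i' j j' : ℕ} (hd : 0 < d) (hj : j < d) (hj' : j' < d)
    (h : j + d * i = j' + d * i') : i = i' ∧ j = j' := by
  have h1 : (j + d * i) / d = i := by
    rw [Nat.add_mul_div_left _ _ hd, Nat.div_eq_of_lt hj]; ring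
  have h2 : (j' + d * i') / d = i' := by
    rw [Nat.add_mul_div_left _ _ hd, Nat.div_eq_of_lt hj']; ring
  have hii : i = i' := by rw [← h1, ← h2, h]
  subst hii
  exact ⟨rfl, by omega⟩

/-- The `v`-th set of the `i`-th block. -/
def f (d i v : ℕ) : Finset ℕ := (B v).image (· + d * i)


end TraceAux

open Finset TraceAux in
/-- Upper-bound construction: for `1 ≤ c ≤ d`, `n ≥ 1` and `d ∣ n` there is a hereditary
family `𝓕` of subsets of an `n`-set `V` with `d·(|𝓕| − 1) = n·(2^d − c)` in which every
vertex `x` satisfies `|𝓕_x| < |𝓕| − (2^{d−1} − c)`. -/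
theorem trace_upper_construction (d c n : ℕ)
    (hc : 1 ≤ c) (hcd : c ≤ d) (hn : 1 ≤ n) (hdvd : d ∣ n) :
    ∃ V : Finset ℕ, V.card = n ∧
      ∃ 𝓕 : Finset (Finset ℕ), 𝓕 ⊆ V.powerset ∧ Hereditary 𝓕 ∧
        (d : ℤ) * ((𝓕.card : ℤ) - 1) = (n : ℤ) * (2 ^ d - c) ∧
        ∀ x ∈ V, ((traceAt 𝓕 x).card : ℤ) < (𝓕.card : ℤ) - (2 ^ (d - 1) - c) := by
  obtain ⟨k, rfl⟩ := hdvd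
  have hd : 0 < d := le_trans hc hcd
  have hk : 0 < k := by
    rcases Nat.eq_zero_or_pos k with rfl | h
    · simp at hn
    · exact h
  have hdE : d < 2 ^ d := Nat.lt_two_pow_self (n := d)
  set E : ℕ := 2 ^ d with hE
  set M : ℕ := E - c with hM
  have hM1 : 1 ≤ M := by omega
  have hMc : M + c = E := by omega
  have hMlt : M < E := by omega
  -- the family
  set 𝓕 : Finset (Finset ℕ) :=
    insert ∅ (((range k) ×ˢ (Icc 1 M)).image (fun p => f d p.1 p.2)) with h𝓕
  -- membership characterization
  have hmem : ∀ F : Finset ℕ, F ∈ 𝓕 ↔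
      F = ∅ ∨ ∃ i, i < k ∧ ∃ v, (1 ≤ v ∧ v ≤ M) ∧ F = f d i v := by
    intro F
    simp only [h𝓕, mem_insert, mem_image, mem_product, mem_range, mem_Icc, Prod.exists]
    constructor
    · rintro (h | ⟨i, v, ⟨hi, hv⟩, rfl⟩)
      · exact Or.inl h
      · exact Or.inr ⟨i, hi, v, hv, rfl⟩
    · rintro (h | ⟨i, hi, v, hv, rfl⟩)
      · exact Or.inl h
      · exact Or.inr ⟨i, v, ⟨hi, hv⟩, rfl⟩
  have hBsub : ∀ v ≤ M, B v ⊆ range d := fun v hv => B_subset_range (by omega)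
  -- elements of f d i v
  have hfel : ∀ i v x, v ≤ M → x ∈ f d i v → ∃ j, j < d ∧ j ∈ B v ∧ x = j + d * i := by
    intro i v x hv hx
    rw [f, mem_image] at hx
    obtain ⟨j, hj, rfl⟩ := hx
    exact ⟨j, mem_range.mp (hBsub v hv hj), hj, rfl⟩
  -- injectivity on the index set
  have hinj : ∀ p ∈ (range k) ×ˢ (Icc 1 M), ∀ q ∈ (range k) ×ˢ (Icc 1 M),
      f d p.1 p.2 = f d q.1 q.2 → p = q := by
    rintro ⟨i, v⟩ hp ⟨i', v'⟩ hq h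
    simp only [mem_product, mem_range, mem_Icc] at hp hq
    obtain ⟨j, hj⟩ := B_nonempty hp.2.1
    have hx : j + d * i ∈ f d i v := mem_image.mpr ⟨j, hj, rfl⟩
    rw [h] at hx
    obtain ⟨j', hj'd, hj', hxe⟩ := hfel i' v' _ hq.2.2 hx
    have hjd : j < d := mem_range.mp (hBsub v hp.2.2 hj)
    have hii : i = i' := (block_eq hd hjd hj'd hxe).1
    subst hii
    have hBB : B v = B v' := Finset.image_injective (add_left_injective (d * i)) h
    have : v = v' := by rw [← sum_B v, ← sum_B v', hBB]
    subst this
    rfl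
  -- 𝓕 ⊆ powerset
  have hpow : 𝓕 ⊆ (range (d * k)).powerset := by
    intro F hF
    rw [mem_powerset]
    rw [hmem] at hF
    rcases hF with rfl | ⟨i, hi, v, hv, rfl⟩
    · exact empty_subset _
    · intro x hx
      obtain ⟨j, hjd, _, rfl⟩ := hfel i v x hv.2 hx
      rw [mem_range]
      have : d * (i + 1) ≤ d * k := Nat.mul_le_mul_left d hi
      nlinarith
  -- hereditary
  have hHer : Hereditary 𝓕 := by
    intro F hF F' hF'
    rw [hmem] at hF ⊢
    rcases hF with rfl | ⟨i, hi, v, hv, rfl⟩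
    · exact Or.inl (Finset.subset_empty.mp hF')
    rcases F'.eq_empty_or_nonempty with rfl | hne
    · exact Or.inl rfl
    right
    set G' : Finset ℕ := F'.image (fun x => x - d * i) with hG'
    have hrec : ∀ x ∈ F', (x - d * i) + d * i = x := by
      intro x hx
      obtain ⟨j, _, _, rfl⟩ := hfel i v x hv.2 (hF' hx)
      omega
    have hF'eq : G'.image (· + d * i) = F' := by
      rw [hG', Finset.image_image]
      calc F'.image ((· + d * i) ∘ (fun x => x - d * i)) = F'.image id :=
            Finset.image_congr (fun x hx => hrec x hx)
        _ = F' := Finset.image_id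
    have hG'sub : G' ⊆ B v := by
      intro j hj
      rw [hG', mem_image] at hj
      obtain ⟨x, hx, rfl⟩ := hj
      obtain ⟨j', _, hj'B, rfl⟩ := hfel i v x hv.2 (hF' hx)
      simpa using hj'B
    set v' : ℕ := ∑ j ∈ G', 2 ^ j with hv'
    have hBv' : B v' = G' := B_sum G'
    have hv'le : v' ≤ M := by
      calc v' ≤ ∑ j ∈ B v, 2 ^ j := Finset.sum_le_sum_of_subset hG'sub
        _ = v := sum_B v
        _ ≤ M := hv.2
    have hG'ne : G'.Nonempty := hne.image _
    obtain ⟨j, hj⟩ := hG'ne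
    have hv'1 : 1 ≤ v' := by
      have h1 : 2 ^ j ≤ v' := Finset.single_le_sum (fun _ _ => Nat.zero_le _) hj
      have := Nat.one_le_two_pow (n := j)
      omega
    refine ⟨i, hi, v', ⟨hv'1, hv'le⟩, ?_⟩
    rw [f, hBv', hF'eq]
  -- cardinality
  have hcard : 𝓕.card = k * M + 1 := by
    rw [h𝓕, card_insert_of_notMem, Finset.card_image_of_injOn hinj, card_product,
      card_range, Nat.card_Icc, Nat.add_sub_cancel]
    rw [mem_image]
    rintro ⟨⟨i, v⟩, hp, hfe⟩
    simp only [mem_product, mem_range, mem_Icc] at hp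
    obtain ⟨j, hj⟩ := B_nonempty hp.2.1
    have : j + d * i ∈ f d i v := mem_image.mpr ⟨j, hj, rfl⟩
    rw [hfe] at this
    simp at this
  have hMZ : (M : ℤ) = (2 : ℤ) ^ d - c := by
    have h1 : ((M + c : ℕ) : ℤ) = ((2 ^ d : ℕ) : ℤ) := by rw [hMc, hE]
    push_cast at h1
    linarith
  refine ⟨range (d * k), by simp, 𝓕, hpow, hHer, ?_, ?_⟩
  · rw [hcard]
    push_cast
    rw [hMZ]
    ring
  · -- trace bound
    intro x hx
    rw [mem_range] at hx
    set i : ℕ := x / d with hi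
    set r : ℕ := x % d with hr
    have hrd : r < d := Nat.mod_lt _ hd
    have hik : i < k := Nat.div_lt_of_lt_mul hx
    have hxe : r + d * i = x := Nat.mod_add_div x d
    -- trace = filter
    have htr : traceAt 𝓕 x = 𝓕.filter (fun F => x ∉ F) := by
      ext F
      simp only [traceAt, mem_image, mem_filter]
      constructor
      · rintro ⟨F₀, h₀, rfl⟩
        exact ⟨hHer F₀ h₀ _ (erase_subset _ _), notMem_erase _ _⟩
      · rintro ⟨hF, hxF⟩
        exact ⟨F, hF, erase_eq_of_notMem hxF⟩
    have hsplit : (𝓕.filter (fun F => x ∈ F)).card + (𝓕.filter (fun F => x ∉ F)).card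
        = 𝓕.card := card_filter_add_card_filter_not _
    -- the sets containing x
    set T : Finset ℕ := (Icc 1 M).filter (fun v => r ∈ B v) with hT
    have hTle : T.card ≤ (𝓕.filter (fun F => x ∈ F)).card := by
      apply card_le_card_of_injOn (fun v => f d i v)
      · intro v hv
        simp only [Finset.mem_coe, hT, mem_filter, mem_Icc] at hv
        rw [Finset.mem_coe, mem_filter]
        beta_reduce
        constructor
        · rw [hmem]
          exact Or.inr ⟨i, hik, v, hv.1, rfl⟩
        · rw [f, mem_image]
          exact ⟨r, hv.2, hxe⟩
      · intro v hv v' hv' h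
        rw [Finset.mem_coe, hT, mem_filter, mem_Icc] at hv hv'
        have := hinj (i, v) (by simp [mem_product, hik, hv.1.1, hv.1.2])
          (i, v') (by simp [mem_product, hik, hv'.1.1, hv'.1.2]) h
        exact (Prod.mk.injEq _ _ _ _).mp this |>.2
    -- counting T
    have hTcount : 2 ^ (d - 1) + 1 ≤ T.card + c := by
      set U : Finset (Finset ℕ) := (((range d).erase r).powerset).image (insert r) with hU
      have hUcard : U.card = 2 ^ (d - 1) := by
        rw [hU, Finset.card_image_of_injOn, card_powerset, card_erase_of_mem
          (mem_range.mpr hrd), card_range]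
        intro G hG G' hG' h
        rw [Finset.mem_coe, mem_powerset] at hG hG'
        have hrG : r ∉ G := fun hrG => (Finset.notMem_erase r _) (hG hrG)
        have hrG' : r ∉ G' := fun hrG' => (Finset.notMem_erase r _) (hG' hrG')
        rw [← Finset.erase_insert hrG, ← Finset.erase_insert hrG', h]
      set W : Finset ℕ := U.image (fun G => ∑ j ∈ G, 2 ^ j) with hW
      have hWcard : W.card = 2 ^ (d - 1) := by
        rw [hW, Finset.card_image_of_injective _ sum_inj, hUcard]
      have hWsub : W ⊆ T ∪ Ioc M (E - 1) := by
        intro w hw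
        rw [hW, mem_image] at hw
        obtain ⟨G, hG, rfl⟩ := hw
        rw [hU, mem_image] at hG
        obtain ⟨G₀, hG₀, rfl⟩ := hG
        rw [mem_powerset] at hG₀
        set w := ∑ j ∈ insert r G₀, 2 ^ j with hwdef
        have hsub : insert r G₀ ⊆ range d :=
          insert_subset (mem_range.mpr hrd) (hG₀.trans (erase_subset _ _))
        have hwle : w ≤ E - 1 := by
          calc w ≤ ∑ j ∈ range d, 2 ^ j := Finset.sum_le_sum_of_subset hsub
            _ = E - 1 := by rw [sum_range_two_pow]
        have hw1 : 1 ≤ w := by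
          have h1 : 2 ^ r ≤ w := Finset.single_le_sum (fun _ _ => Nat.zero_le _)
            (mem_insert_self r G₀)
          have := Nat.one_le_two_pow (n := r)
          omega
        have hrB : r ∈ B w := by rw [hwdef, B_sum]; exact mem_insert_self r G₀
        rcases le_or_gt w M with h | h
        · exact mem_union_left _ (by rw [hT, mem_filter, mem_Icc]; exact ⟨⟨hw1, h⟩, hrB⟩)
        · exact mem_union_right _ (by rw [mem_Ioc]; exact ⟨h, hwle⟩)
      have := (hWcard ▸ card_le_card hWsub).trans (card_union_le _ _)
      rw [Nat.card_Ioc] at this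
      omega
    -- finish
    set P : ℕ := 2 ^ (d - 1) with hP
    rw [htr, show ((2 : ℤ) ^ (d - 1)) = ((P : ℕ) : ℤ) by rw [hP]; push_cast; ring]
    omega
end

section
/- Let d, n be natural numbers with d ≥ 1 and n ≥ 1. Let V be a finite set with |V| = n and let 𝓕 be a family of subsets of V satisfying d·|𝓕| ≤ n·(2^d − 1). Then there exists a vertex x ∈ V such that |𝓕_x| ≥ |𝓕| − (2^{d−1} − 1). -/
open Finset

section Aux

variable {α : Type*} [DecidableEq α]

/-- A family closed under erasing single elements (equivalently, a downset). -/
def EraseClosed (𝓑 : Finset (Finset α)) : Prop := ∀ F ∈ 𝓑, ∀ j : α, F.erase j ∈ 𝓑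

theorem EraseClosed.mem_of_subset {𝓑 : Finset (Finset α)} (h : EraseClosed 𝓑) :
    ∀ G : Finset α, G ∈ 𝓑 → ∀ H ⊆ G, H ∈ 𝓑 := by
  intro G
  induction G using Finset.strongInduction with
  | _ G ih =>
    intro hG H hH
    rcases hH.eq_or_ssubset with rfl | hss
    · exact hG
    · obtain ⟨z, hzG, hzH⟩ := exists_of_ssubset hss
      exact ih (G.erase z) (erase_ssubset hzG) (h G hG z)
        H (subset_erase.2 ⟨hss.subset, hzH⟩)

/-- Key numerical inequality: for `0 ≤ t ≤ 1` and `1 ≤ r`,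
`(1+r)^t ≤ r^t + 2^t - 1` (concavity of `rpow`). -/
theorem key_rpow_ineq {t r : ℝ} (ht0 : 0 ≤ t) (ht1 : t ≤ 1) (hr : 1 ≤ r) :
    (1 + r) ^ t ≤ r ^ t + 2 ^ t - 1 := by
  have hconc := Real.concaveOn_rpow ht0 ht1
  have hr0 : (0:ℝ) < r := by linarith
  set lam : ℝ := (r - 1) / r with hlam
  set mu : ℝ := 1 / r with hmu
  have hlam0 : 0 ≤ lam := by
    apply div_nonneg <;> linarith
  have hmu0 : 0 ≤ mu := by positivity
  have hsum : lam + mu = 1 := by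
    rw [hlam, hmu]; field_simp; ring
  have h1 : (1:ℝ) ∈ Set.Ici (0:ℝ) := by norm_num
  have h2 : (1 + r) ∈ Set.Ici (0:ℝ) := by simp only [Set.mem_Ici]; linarith
  have hA := hconc.2 h1 h2 hlam0 hmu0 hsum
  have hB := hconc.2 h1 h2 hmu0 hlam0 (by linarith)
  simp only [smul_eq_mul] at hA hB
  have hrne : r ≠ 0 := hr0.ne'
  have e1 : lam * 1 + mu * (1 + r) = 2 := by
    rw [hlam, hmu]; field_simp [hrne]; ring
  have e2 : mu * 1 + lam * (1 + r) = r := by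
    rw [hlam, hmu]; field_simp [hrne]; ring
  rw [e1] at hA
  rw [e2] at hB
  have h1t : (1:ℝ) ^ t = 1 := Real.one_rpow t
  rw [h1t] at hA hB
  have hX : lam * ((1 + r) ^ t) + mu * ((1 + r) ^ t) = (1 + r) ^ t := by
    rw [← add_mul, hsum, one_mul]
  linarith [hA, hB, hX]

/-- Split form of the key inequality. -/
theorem key_split_ineq {x a b : ℝ} (hx0 : 0 ≤ x) (hx1 : x ≤ 1)
    (hb : 1 ≤ b) (hab : b ≤ a) :
    (a + b) ^ (Real.logb 2 (1 + x)) ≤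
      a ^ (Real.logb 2 (1 + x)) + x * b ^ (Real.logb 2 (1 + x)) := by
  set t := Real.logb 2 (1 + x) with htdef
  have h1x : (0:ℝ) < 1 + x := by linarith
  have ht0 : 0 ≤ t := Real.logb_nonneg (by norm_num) (by linarith)
  have ht1 : t ≤ 1 := by
    rw [htdef, Real.logb_le_iff_le_rpow (by norm_num) h1x]
    rw [Real.rpow_one]; linarith
  have h2t : (2:ℝ) ^ t = 1 + x := Real.rpow_logb (by norm_num) (by norm_num) h1x
  have hb0 : (0:ℝ) < b := by linarith
  have ha0 : (0:ℝ) < a := by linarith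
  set r : ℝ := a / b with hrdef
  have hr : 1 ≤ r := (one_le_div hb0).2 hab
  have hkey := key_rpow_ineq ht0 ht1 hr
  have hbne : b ≠ 0 := hb0.ne'
  have hab' : a + b = b * (1 + r) := by
    rw [hrdef]; field_simp; ring
  have hbr : b * r = a := by
    rw [hrdef]; field_simp
  have h1r0 : (0:ℝ) ≤ 1 + r := by linarith
  rw [hab', Real.mul_rpow hb0.le h1r0]
  have hbt : (0:ℝ) ≤ b ^ t := Real.rpow_nonneg hb0.le t
  calc b ^ t * (1 + r) ^ t ≤ b ^ t * (r ^ t + 2 ^ t - 1) :=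
        mul_le_mul_of_nonneg_left hkey hbt
    _ = (b * r) ^ t + (2 ^ t - 1) * b ^ t := by
        rw [Real.mul_rpow hb0.le (by positivity)]; ring
    _ = a ^ t + x * b ^ t := by rw [hbr, h2t]; ring_nf

/-- Pointwise polynomial bound for erase-closed families:
`∑_{G ∈ 𝓑} x^{|G|} ≥ |𝓑| ^ logb 2 (1+x)` for `x ∈ [0,1]`. -/
theorem pointwise_bound {x : ℝ} (hx0 : 0 ≤ x) (hx1 : x ≤ 1) :
    ∀ (N : ℕ) (𝓑 : Finset (Finset α)), (∑ G ∈ 𝓑, G.card) ≤ N → 𝓑.Nonempty →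
    EraseClosed 𝓑 →
    (𝓑.card : ℝ) ^ (Real.logb 2 (1 + x)) ≤ ∑ G ∈ 𝓑, x ^ (G.card) := by
  intro N
  induction N using Nat.strong_induction_on with
  | _ N ih =>
    intro 𝓑 hmeas hne hEC
    by_cases hall : ∀ G ∈ 𝓑, G = ∅
    · have h1 : 𝓑 = {∅} := Finset.eq_singleton_iff_nonempty_unique_mem.2 ⟨hne, hall⟩
      rw [h1]
      simp [Real.one_rpow]
    · push_neg at hall
      obtain ⟨G₀, hG₀, hG₀ne⟩ := hall
      obtain ⟨z, hz⟩ := hG₀ne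
      set B0 := 𝓑.filter (fun F => z ∉ F) with hB0
      set Bz := 𝓑.filter (fun F => z ∈ F) with hBz
      set B1 := Bz.image (fun F => F.erase z) with hB1
      have hinj : ∀ F ∈ Bz, ∀ G ∈ Bz, F.erase z = G.erase z → F = G := by
        intro F hF G hG h
        exact Finset.erase_injOn' z (by simpa using (mem_filter.1 hF).2)
          (by simpa using (mem_filter.1 hG).2) h
      have hB1card : B1.card = Bz.card := Finset.card_image_of_injOn hinj
      have hG₀Bz : G₀ ∈ Bz := mem_filter.2 ⟨hG₀, hz⟩
      have hB1sub : B1 ⊆ B0 := by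
        intro G hG
        obtain ⟨F, hF, rfl⟩ := mem_image.1 hG
        exact mem_filter.2 ⟨hEC F (mem_filter.1 hF).1 z, notMem_erase z F⟩
      have hB1ne : B1.Nonempty := ⟨G₀.erase z, mem_image_of_mem _ hG₀Bz⟩
      have hB0ne : B0.Nonempty := hB1ne.mono hB1sub
      have hB0EC : EraseClosed B0 := by
        intro F hF j
        obtain ⟨hF𝓑, hzF⟩ := mem_filter.1 hF
        exact mem_filter.2 ⟨hEC F hF𝓑 j, fun hze => hzF (mem_of_mem_erase hze)⟩
      have hB1EC : EraseClosed B1 := by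
        intro G hG j
        obtain ⟨F, hF, rfl⟩ := mem_image.1 hG
        obtain ⟨hF𝓑, hzF⟩ := mem_filter.1 hF
        by_cases hjz : j = z
        · rw [hjz, erase_idem]; exact mem_image_of_mem _ hF
        · have h1 : F.erase j ∈ Bz :=
            mem_filter.2 ⟨hEC F hF𝓑 j, mem_erase.2 ⟨fun h => hjz h.symm, hzF⟩⟩
          have h2 : (F.erase j).erase z = (F.erase z).erase j := by
            rw [Finset.erase_right_comm]
          exact h2 ▸ mem_image_of_mem _ h1
      have hsplitsum : ∑ G ∈ 𝓑, x ^ G.card =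
          (∑ F ∈ Bz, x ^ F.card) + ∑ G ∈ B0, x ^ G.card := by
        rw [hBz, hB0]
        exact (Finset.sum_filter_add_sum_filter_not 𝓑 (fun F => z ∈ F) _).symm
      have hBzsum : ∑ F ∈ Bz, x ^ F.card = x * ∑ G ∈ B1, x ^ G.card := by
        rw [hB1, Finset.sum_image hinj, Finset.mul_sum]
        apply Finset.sum_congr rfl
        intro F hF
        have hzF : z ∈ F := (mem_filter.1 hF).2
        have hc : (F.erase z).card + 1 = F.card := Finset.card_erase_add_one hzF
        rw [← hc, pow_succ]
        ring
      have hmsplit : (∑ F ∈ Bz, F.card) + (∑ G ∈ B0, G.card) = ∑ G ∈ 𝓑, G.card := by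
        rw [hBz, hB0]
        exact Finset.sum_filter_add_sum_filter_not 𝓑 (fun F => z ∈ F) _
      have hBz1 : 1 ≤ ∑ F ∈ Bz, F.card := by
        calc 1 ≤ G₀.card := Finset.card_pos.2 ⟨z, hz⟩
          _ ≤ ∑ F ∈ Bz, F.card :=
            Finset.single_le_sum (f := fun F => F.card) (fun i _ => Nat.zero_le _) hG₀Bz
      have hBzne : Bz.Nonempty := ⟨G₀, hG₀Bz⟩
      have hB1lt : (∑ G ∈ B1, G.card) < ∑ F ∈ Bz, F.card := by
        rw [hB1, Finset.sum_image hinj]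
        exact Finset.sum_lt_sum_of_nonempty hBzne fun F hF =>
          Finset.card_erase_lt_of_mem (mem_filter.1 hF).2
      have hm0 : (∑ G ∈ B0, G.card) < N := by omega
      have hm1 : (∑ G ∈ B1, G.card) < N := by omega
      have h0 := ih _ hm0 B0 le_rfl hB0ne hB0EC
      have h1 := ih _ hm1 B1 le_rfl hB1ne hB1EC
      have hb1 : (1:ℝ) ≤ (B1.card : ℝ) := by exact_mod_cast hB1ne.card_pos
      have hble : (B1.card : ℝ) ≤ (B0.card : ℝ) := by exact_mod_cast card_le_card hB1sub
      have hkey := key_split_ineq (a := (B0.card : ℝ)) (b := (B1.card : ℝ)) hx0 hx1 hb1 hble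
      have hcards : Bz.card + B0.card = 𝓑.card := by
        rw [hBz, hB0]
        exact Finset.card_filter_add_card_filter_not _
      have hcard𝓑 : (𝓑.card : ℝ) = (B0.card : ℝ) + (B1.card : ℝ) := by
        rw [hB1card]
        exact_mod_cast (by omega : 𝓑.card = B0.card + Bz.card)
      rw [hsplitsum, hBzsum, hcard𝓑]
      calc ((B0.card : ℝ) + (B1.card : ℝ)) ^ (Real.logb 2 (1 + x)) ≤
            (B0.card : ℝ) ^ (Real.logb 2 (1 + x)) +
              x * (B1.card : ℝ) ^ (Real.logb 2 (1 + x)) := hkey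
        _ ≤ x * (∑ G ∈ B1, x ^ G.card) + ∑ G ∈ B0, x ^ G.card := by
            have := mul_le_mul_of_nonneg_left h1 hx0
            linarith [h0]

/-- Lemma A: a nonempty erase-closed family of size at least `2^(d-1)` has
`∑ 1/(|G|+1) ≥ (2^d-1)/d`. -/
theorem lemA (d : ℕ) (hd : 1 ≤ d) (𝓑 : Finset (Finset α)) (hne : 𝓑.Nonempty)
    (hEC : EraseClosed 𝓑) (hcard : 2 ^ (d - 1) ≤ 𝓑.card) :
    ((2 : ℝ) ^ d - 1) / d ≤ ∑ G ∈ 𝓑, (1 : ℝ) / (G.card + 1) := by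
  have hfi : IntervalIntegrable (fun x : ℝ => (1 + x) ^ (d - 1)) MeasureTheory.volume 0 1 :=
    ((continuous_const.add continuous_id).pow _).intervalIntegrable 0 1
  have hgi : IntervalIntegrable (fun x : ℝ => ∑ G ∈ 𝓑, x ^ G.card) MeasureTheory.volume 0 1 := by
    apply Continuous.intervalIntegrable
    exact continuous_finset_sum _ fun G _ => continuous_pow _
  have hpt : ∀ x ∈ Set.Icc (0:ℝ) 1, (1 + x) ^ (d - 1) ≤ ∑ G ∈ 𝓑, x ^ G.card := by
    intro x hx
    obtain ⟨hx0, hx1⟩ := hx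
    have hp := pointwise_bound hx0 hx1 _ 𝓑 le_rfl hne hEC
    set t := Real.logb 2 (1 + x) with htdef
    have h1x : (0:ℝ) < 1 + x := by linarith
    have ht0 : 0 ≤ t := Real.logb_nonneg (by norm_num) (by linarith)
    have h2t : (2:ℝ) ^ t = 1 + x := Real.rpow_logb (by norm_num) (by norm_num) h1x
    have hstep : ((2:ℝ) ^ (d-1)) ^ t = (1 + x) ^ (d - 1) := by
      rw [← Real.rpow_natCast (2:ℝ) (d-1), ← Real.rpow_mul (by norm_num), mul_comm,
        Real.rpow_mul (by norm_num), h2t, Real.rpow_natCast]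
    have hmono : ((2:ℝ) ^ (d-1)) ^ t ≤ (𝓑.card : ℝ) ^ t := by
      apply Real.rpow_le_rpow (by positivity) _ ht0
      exact_mod_cast hcard
    calc (1+x)^(d-1) = ((2:ℝ)^(d-1)) ^ t := hstep.symm
      _ ≤ (𝓑.card : ℝ) ^ t := hmono
      _ ≤ _ := hp
  have hint := intervalIntegral.integral_mono_on (by norm_num : (0:ℝ) ≤ 1) hfi hgi hpt
  have hL : (∫ x in (0:ℝ)..1, (1 + x) ^ (d-1)) = ((2:ℝ) ^ d - 1) / d := by
    rw [intervalIntegral.integral_comp_add_left (fun y : ℝ => y ^ (d-1)) 1]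
    rw [integral_pow]
    have hdd : d - 1 + 1 = d := Nat.succ_pred_eq_of_pos hd
    rw [hdd]
    have hc : ((d - 1 : ℕ) : ℝ) + 1 = (d : ℝ) := by
      rw [Nat.cast_sub hd]; push_cast; ring
    rw [hc]
    norm_num
  have hR : (∫ x in (0:ℝ)..1, ∑ G ∈ 𝓑, x ^ G.card) = ∑ G ∈ 𝓑, (1:ℝ)/(G.card + 1) := by
    rw [intervalIntegral.integral_finset_sum]
    · apply Finset.sum_congr rfl
      intro G _
      rw [integral_pow]
      norm_num
    · intro G _
      exact (continuous_pow _).intervalIntegrable 0 1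
  rw [hL, hR] at hint
  exact hint

/-- Core counting: an erase-closed family on `V` with all degrees at least
`2^(d-1)` is large. -/
theorem core (d : ℕ) (hd : 1 ≤ d) (V : Finset α) (hVne : V.Nonempty)
    (𝓓 : Finset (Finset α)) (hsub : 𝓓 ⊆ V.powerset) (hEC : EraseClosed 𝓓)
    (hdeg : ∀ y ∈ V, 2 ^ (d - 1) ≤ (𝓓.filter (fun F => y ∈ F)).card) :
    (V.card : ℝ) * (((2 : ℝ) ^ d - 1) / d) + 1 ≤ 𝓓.card := by
  obtain ⟨y₀, hy₀⟩ := hVne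
  have hfilter_ne : ∀ y ∈ V, (𝓓.filter (fun F => y ∈ F)).Nonempty := by
    intro y hy
    have h2 := hdeg y hy
    have h1 : 0 < (𝓓.filter (fun F => y ∈ F)).card :=
      lt_of_lt_of_le (by positivity) h2
    exact card_pos.1 h1
  have h𝓓ne : 𝓓.Nonempty := by
    obtain ⟨F, hF⟩ := hfilter_ne y₀ hy₀
    exact ⟨F, (mem_filter.1 hF).1⟩
  have hempty : ∅ ∈ 𝓓 := by
    obtain ⟨F, hF⟩ := h𝓓ne
    exact hEC.mem_of_subset F hF ∅ (empty_subset F)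
  set 𝓓' := 𝓓.erase ∅ with h𝓓'
  have hstep1 : (𝓓'.card : ℝ) = ∑ F ∈ 𝓓', ∑ y ∈ F, (1:ℝ)/(F.card) := by
    rw [Finset.card_eq_sum_ones, Nat.cast_sum]
    apply Finset.sum_congr rfl
    intro F hF
    have hFne : F ≠ ∅ := (mem_erase.1 hF).1
    have hc : (0:ℝ) < F.card := by
      exact_mod_cast card_pos.2 (nonempty_iff_ne_empty.2 hFne)
    rw [Finset.sum_const, nsmul_eq_mul]
    field_simp
    norm_num
  have hsubV : ∀ F ∈ 𝓓', F ⊆ V := by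
    intro F hF
    exact mem_powerset.1 (hsub (mem_of_mem_erase hF))
  have hstep2 : ∑ F ∈ 𝓓', ∑ y ∈ F, (1:ℝ)/(F.card) =
      ∑ y ∈ V, ∑ F ∈ 𝓓'.filter (fun F => y ∈ F), (1:ℝ)/(F.card) := by
    have h1 : ∀ F ∈ 𝓓', ∑ y ∈ F, (1:ℝ)/(F.card) =
        ∑ y ∈ V, if y ∈ F then (1:ℝ)/(F.card) else 0 := by
      intro F hF
      rw [← Finset.sum_filter]
      congr 1
      ext y
      simp only [mem_filter]
      exact ⟨fun h => ⟨hsubV F hF h, h⟩, fun h => h.2⟩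
    rw [Finset.sum_congr rfl h1, Finset.sum_comm]
    apply Finset.sum_congr rfl
    intro y _
    rw [Finset.sum_filter]
  have hstep3 : ∀ y ∈ V, ((2:ℝ)^d - 1)/d ≤
      ∑ F ∈ 𝓓'.filter (fun F => y ∈ F), (1:ℝ)/(F.card) := by
    intro y hy
    have hfeq : 𝓓'.filter (fun F => y ∈ F) = 𝓓.filter (fun F => y ∈ F) := by
      ext F
      simp only [h𝓓', mem_filter, mem_erase]
      constructor
      · rintro ⟨⟨_, h1⟩, h2⟩; exact ⟨h1, h2⟩
      · rintro ⟨h1, h2⟩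
        exact ⟨⟨fun he => by simp [he] at h2, h1⟩, h2⟩
    rw [hfeq]
    set Fy := 𝓓.filter (fun F => y ∈ F) with hFy
    have hinj : ∀ F ∈ Fy, ∀ G ∈ Fy, F.erase y = G.erase y → F = G := by
      intro F hF G hG h
      exact Finset.erase_injOn' y (by simpa using (mem_filter.1 hF).2)
        (by simpa using (mem_filter.1 hG).2) h
    set L := Fy.image (fun F => F.erase y) with hL
    have hLcard : L.card = Fy.card := Finset.card_image_of_injOn hinj
    have hLne : L.Nonempty := (hfilter_ne y hy).image _
    have hLEC : EraseClosed L := by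
      intro G hG j
      obtain ⟨F, hF, rfl⟩ := mem_image.1 hG
      obtain ⟨hF𝓓, hyF⟩ := mem_filter.1 hF
      by_cases hjy : j = y
      · rw [hjy, erase_idem]; exact mem_image_of_mem _ hF
      · have h1 : F.erase j ∈ Fy :=
          mem_filter.2 ⟨hEC F hF𝓓 j, mem_erase.2 ⟨fun h => hjy h.symm, hyF⟩⟩
        have h2 : (F.erase j).erase y = (F.erase y).erase j := by
          rw [Finset.erase_right_comm]
        exact h2 ▸ mem_image_of_mem _ h1
    have hsumL : ∑ F ∈ Fy, (1:ℝ)/(F.card) = ∑ G ∈ L, (1:ℝ)/(G.card + 1) := by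
      rw [hL, Finset.sum_image hinj]
      apply Finset.sum_congr rfl
      intro F hF
      have hyF : y ∈ F := (mem_filter.1 hF).2
      have hc : (F.erase y).card + 1 = F.card := Finset.card_erase_add_one hyF
      congr 1
      exact_mod_cast hc.symm
    rw [hsumL]
    exact lemA d hd L hLne hLEC (hLcard ▸ hdeg y hy)
  have hmain : (V.card : ℝ) * (((2:ℝ)^d - 1)/d) ≤ (𝓓'.card : ℝ) := by
    rw [hstep1, hstep2]
    calc (V.card : ℝ) * (((2:ℝ)^d - 1)/d) = ∑ _y ∈ V, ((2:ℝ)^d - 1)/d := by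
          rw [Finset.sum_const, nsmul_eq_mul]
      _ ≤ _ := Finset.sum_le_sum hstep3
  have hcard' : (𝓓'.card : ℝ) = (𝓓.card : ℝ) - 1 := by
    rw [h𝓓', Finset.card_erase_of_mem hempty]
    rw [Nat.cast_sub (Finset.card_pos.2 h𝓓ne)]
    norm_num
  rw [hcard'] at hmain
  linarith

end Aux

section Compress

variable {α : Type*} [DecidableEq α]

/-- Down-compression of a family at a coordinate `j`. -/
def compress (j : α) (𝓕 : Finset (Finset α)) : Finset (Finset α) :=
  𝓕.image fun F => if j ∈ F ∧ F.erase j ∉ 𝓕 then F.erase j else F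

theorem compress_injOn (j : α) (𝓕 : Finset (Finset α)) :
    ∀ F ∈ 𝓕, ∀ G ∈ 𝓕,
      (if j ∈ F ∧ F.erase j ∉ 𝓕 then F.erase j else F) =
      (if j ∈ G ∧ G.erase j ∉ 𝓕 then G.erase j else G) → F = G := by
  intro F hF G hG h
  by_cases hcF : j ∈ F ∧ F.erase j ∉ 𝓕 <;> by_cases hcG : j ∈ G ∧ G.erase j ∉ 𝓕
  · rw [if_pos hcF, if_pos hcG] at h
    exact Finset.erase_injOn' j (by simpa using hcF.1) (by simpa using hcG.1) h
  · rw [if_pos hcF, if_neg hcG] at h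
    exact (hcF.2 (by rw [h]; exact hG)).elim
  · rw [if_neg hcF, if_pos hcG] at h
    exact (hcG.2 (by rw [← h]; exact hF)).elim
  · rw [if_neg hcF, if_neg hcG] at h
    exact h

theorem card_compress (j : α) (𝓕 : Finset (Finset α)) :
    (compress j 𝓕).card = 𝓕.card :=
  Finset.card_image_of_injOn (compress_injOn j 𝓕)

theorem compress_subset_powerset {j : α} {V : Finset α} {𝓕 : Finset (Finset α)}
    (h : 𝓕 ⊆ V.powerset) : compress j 𝓕 ⊆ V.powerset := by
  intro X hX
  obtain ⟨F, hF, rfl⟩ := mem_image.1 hX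
  have hFV : F ⊆ V := mem_powerset.1 (h hF)
  split_ifs
  · exact mem_powerset.2 ((erase_subset j F).trans hFV)
  · exact mem_powerset.2 hFV

theorem sum_card_compress_lt {j : α} {𝓕 : Finset (Finset α)}
    (h : ∃ F ∈ 𝓕, j ∈ F ∧ F.erase j ∉ 𝓕) :
    (∑ G ∈ compress j 𝓕, G.card) < ∑ F ∈ 𝓕, F.card := by
  rw [compress, Finset.sum_image (compress_injOn j 𝓕)]
  obtain ⟨F₀, hF₀, hj₀, hne₀⟩ := h
  apply Finset.sum_lt_sum
  · intro F _
    split_ifs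
    · exact card_le_card (erase_subset j F)
    · exact le_rfl
  · refine ⟨F₀, hF₀, ?_⟩
    rw [if_pos ⟨hj₀, hne₀⟩]
    exact Finset.card_erase_lt_of_mem hj₀

theorem trace_compress_le (j : α) (𝓕 : Finset (Finset α)) (y : α) :
    (traceAt (compress j 𝓕) y).card ≤ (traceAt 𝓕 y).card := by
  by_cases hyj : y = j
  · subst hyj
    apply Finset.card_le_card
    intro X hX
    obtain ⟨G, hG, rfl⟩ := mem_image.1 hX
    obtain ⟨F, hF, rfl⟩ := mem_image.1 hG
    split_ifs
    · exact mem_image.2 ⟨F, hF, by rw [erase_idem]⟩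
    · exact mem_image_of_mem _ hF
  · have hsub : traceAt (compress j 𝓕) y ⊆ compress j (traceAt 𝓕 y) := by
      intro X hX
      obtain ⟨G, hG, rfl⟩ := mem_image.1 hX
      obtain ⟨F, hF, rfl⟩ := mem_image.1 hG
      by_cases hc : j ∈ F ∧ F.erase j ∉ 𝓕
      · rw [if_pos hc]
        have hGm : F.erase y ∈ traceAt 𝓕 y := mem_image_of_mem _ hF
        have hjG : j ∈ F.erase y := mem_erase.2 ⟨fun hh => hyj hh.symm, hc.1⟩
        have hcomm : (F.erase j).erase y = (F.erase y).erase j :=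
          Finset.erase_right_comm
        by_cases hGj : (F.erase y).erase j ∈ traceAt 𝓕 y
        · refine mem_image.2 ⟨(F.erase y).erase j, hGj, ?_⟩
          rw [if_neg, hcomm]
          rintro ⟨hmem, -⟩
          exact (notMem_erase j _) hmem
        · refine mem_image.2 ⟨F.erase y, hGm, ?_⟩
          rw [if_pos ⟨hjG, hGj⟩, hcomm]
      · rw [if_neg hc]
        push_neg at hc
        have hGm : F.erase y ∈ traceAt 𝓕 y := mem_image_of_mem _ hF
        refine mem_image.2 ⟨F.erase y, hGm, ?_⟩
        rw [if_neg]
        rintro ⟨hjG, hnot⟩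
        have hjF : j ∈ F := mem_of_mem_erase hjG
        have h1 : F.erase j ∈ 𝓕 := hc hjF
        have h2 : (F.erase y).erase j = (F.erase j).erase y :=
          Finset.erase_right_comm
        exact hnot (h2 ▸ mem_image_of_mem _ h1)
    calc (traceAt (compress j 𝓕) y).card
        ≤ (compress j (traceAt 𝓕 y)).card := card_le_card hsub
      _ = (traceAt 𝓕 y).card := card_compress j _

theorem exists_downset (V : Finset α) :
    ∀ (M : ℕ) (𝓕 : Finset (Finset α)), (∑ F ∈ 𝓕, F.card) ≤ M → 𝓕 ⊆ V.powerset →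
    ∃ 𝓓 : Finset (Finset α), 𝓓 ⊆ V.powerset ∧ EraseClosed 𝓓 ∧
      𝓓.card = 𝓕.card ∧ ∀ y : α, (traceAt 𝓓 y).card ≤ (traceAt 𝓕 y).card := by
  intro M
  induction M using Nat.strong_induction_on with
  | _ M ih =>
    intro 𝓕 hm hsub
    by_cases hEC : ∀ F ∈ 𝓕, ∀ j : α, F.erase j ∈ 𝓕
    · exact ⟨𝓕, hsub, hEC, rfl, fun y => le_rfl⟩
    · push_neg at hEC
      obtain ⟨F₀, hF₀, j, hj⟩ := hEC
      have hjF₀ : j ∈ F₀ := by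
        by_contra hjn
        rw [Finset.erase_eq_of_notMem hjn] at hj
        exact hj hF₀
      have hlt := sum_card_compress_lt ⟨F₀, hF₀, hjF₀, hj⟩
      obtain ⟨𝓓, h1, h2, h3, h4⟩ := ih _ (lt_of_lt_of_le hlt hm) (compress j 𝓕)
        le_rfl (compress_subset_powerset hsub)
      exact ⟨𝓓, h1, h2, h3.trans (card_compress j 𝓕),
        fun y => (h4 y).trans (trace_compress_le j 𝓕 y)⟩

theorem trace_card_of_eraseClosed {𝓓 : Finset (Finset α)} (hEC : EraseClosed 𝓓)
    (x : α) :
    (traceAt 𝓓 x).card + (𝓓.filter (fun F => x ∈ F)).card = 𝓓.card := by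
  have htr : traceAt 𝓓 x = 𝓓.filter (fun F => x ∉ F) := by
    ext X
    simp only [traceAt, mem_image, mem_filter]
    constructor
    · rintro ⟨F, hF, rfl⟩
      exact ⟨hEC F hF x, notMem_erase x F⟩
    · rintro ⟨hX, hx⟩
      exact ⟨X, hX, Finset.erase_eq_of_notMem hx⟩
  rw [htr, add_comm]
  exact Finset.card_filter_add_card_filter_not _

end Compress

/-- Lower-bound (arrowing) direction: if `d ≥ 1`, `n ≥ 1` and a family `𝓕` of subsets
of an `n`-set `V` has `d·|𝓕| ≤ n·(2^d − 1)`, then some vertex `x ∈ V` satisfies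
`|𝓕_x| ≥ |𝓕| − (2^{d−1} − 1)`. -/
theorem trace_lower_c1 {α : Type*} [DecidableEq α] (d n : ℕ)
    (hd : 1 ≤ d) (hn : 1 ≤ n)
    (V : Finset α) (hV : V.card = n)
    (𝓕 : Finset (Finset α)) (h𝓕 : 𝓕 ⊆ V.powerset)
    (hcount : (d : ℤ) * 𝓕.card ≤ (n : ℤ) * (2 ^ d - 1)) :
    ∃ x ∈ V, (𝓕.card : ℤ) - (2 ^ (d - 1) - 1) ≤ ((traceAt 𝓕 x).card : ℤ) := by
  by_contra hcon
  push_neg at hcon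
  obtain ⟨𝓓, hDsub, hDEC, hDcard, hDtr⟩ :=
    exists_downset V (∑ F ∈ 𝓕, F.card) 𝓕 le_rfl h𝓕
  have hVne : V.Nonempty := by
    rw [← Finset.card_pos, hV]; omega
  have hdeg : ∀ y ∈ V, 2 ^ (d - 1) ≤ (𝓓.filter (fun F => y ∈ F)).card := by
    intro y hy
    have h1 := hcon y hy
    have h2 : ((traceAt 𝓓 y).card : ℤ) ≤ ((traceAt 𝓕 y).card : ℤ) := by
      exact_mod_cast hDtr y
    have h3 := trace_card_of_eraseClosed hDEC y
    rw [hDcard] at h3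
    have h4 : ((traceAt 𝓓 y).card : ℤ) + ((𝓓.filter (fun F => y ∈ F)).card : ℤ)
        = (𝓕.card : ℤ) := by exact_mod_cast h3
    have h5 : (2:ℤ)^(d-1) ≤ ((𝓓.filter (fun F => y ∈ F)).card : ℤ) := by linarith
    exact_mod_cast h5
  have hcore := core d hd V hVne 𝓓 hDsub hDEC hdeg
  have hm : (𝓓.card : ℝ) = (𝓕.card : ℝ) := by exact_mod_cast hDcard
  have hcount' : (d:ℝ) * (𝓕.card:ℝ) ≤ (n:ℝ) * ((2:ℝ)^d - 1) := by exact_mod_cast hcount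
  have hd0 : (0:ℝ) < d := by exact_mod_cast hd
  have hVn : (V.card : ℝ) = n := by exact_mod_cast hV
  rw [hm, hVn] at hcore
  have hdist : (d:ℝ) * ((n:ℝ) * (((2:ℝ)^d - 1)/d) + 1) = (n:ℝ) * ((2:ℝ)^d - 1) + d := by
    field_simp
  have hmul := mul_le_mul_of_nonneg_left hcore hd0.le
  rw [hdist] at hmul
  linarith
end

section
/- For all natural numbers n, m, a, b the following two statements are equivalent: (1) for every finite set V with |V| = n and every hereditary family 𝓕 of subsets of V with |𝓕| ≥ m, there exists a set T ⊆ V with |T| = a such that |𝓕|_T| ≥ b; (2) for every finite set V with |V| = n and every family 𝓕 of subsets of V with |𝓕| ≥ m, there exists a set T ⊆ V with |T| = a such that |𝓕|_T| ≥ b. -/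
/-- The trace of a family `𝓕` on a set `T`: the family `{F ∩ T : F ∈ 𝓕}`. -/
def traceOn {α : Type*} [DecidableEq α] (𝓕 : Finset (Finset α)) (T : Finset α) :
    Finset (Finset α) :=
  𝓕.image fun F => F ∩ T

open Finset FinsetFamily

section Aux
variable {α : Type*} [DecidableEq α]

lemma mem_traceOn {𝓕 : Finset (Finset α)} {T S : Finset α} :
    S ∈ traceOn 𝓕 T ↔ ∃ F ∈ 𝓕, F ∩ T = S := by
  simp [traceOn]

/-- If the family is closed under erasing single elements, it is hereditary. -/
lemma hereditary_of_erase {𝓕 : Finset (Finset α)}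
    (h : ∀ x : α, ∀ F ∈ 𝓕, F.erase x ∈ 𝓕) : Hereditary 𝓕 := by
  have key : ∀ n : ℕ, ∀ F ∈ 𝓕, ∀ F' ⊆ F, (F \ F').card ≤ n → F' ∈ 𝓕 := by
    intro n
    induction n with
    | zero =>
      intro F hF F' hF' hc
      have : F \ F' = ∅ := card_eq_zero.1 (Nat.le_zero.1 hc)
      have hFF' : F ⊆ F' := fun x hx => by
        by_contra hx'
        exact (notMem_empty x) (this ▸ mem_sdiff.2 ⟨hx, hx'⟩)
      rwa [← Finset.Subset.antisymm hFF' hF']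
    | succ n ih =>
      intro F hF F' hF' hc
      by_cases hFF' : F ⊆ F'
      · rwa [← Finset.Subset.antisymm hFF' hF']
      · obtain ⟨x, hxF, hxF'⟩ := not_subset.1 hFF'
        have h1 : F' ⊆ F.erase x := fun y hy =>
          mem_erase.2 ⟨fun h' => hxF' (h' ▸ hy), hF' hy⟩
        have h2 : F.erase x \ F' = (F \ F').erase x := by
          ext y; simp only [mem_sdiff, mem_erase]; tauto
        have h3 : (F.erase x \ F').card ≤ n := by
          rw [h2, card_erase_of_mem (mem_sdiff.2 ⟨hxF, hxF'⟩)]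
          omega
        exact ih (F.erase x) (h x F hF) F' h1 h3
  intro F hF F' hF'
  exact key (F \ F').card F hF F' hF' le_rfl

lemma compression_eq_of_filter_empty {a : α} {𝓕 : Finset (Finset α)}
    (h : ∀ s ∈ 𝓕, s.erase a ∈ 𝓕) : 𝓓 a 𝓕 = 𝓕 := by
  ext s
  rw [Down.mem_compression]
  constructor
  · rintro (⟨hs, -⟩ | ⟨hs, hins⟩)
    · exact hs
    · by_cases ha : a ∈ s
      · rw [insert_eq_of_mem ha] at hins; exact hins
      · have := h _ hins
        rwa [erase_insert ha] at this
  · intro hs; exact Or.inl ⟨hs, h s hs⟩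

/-- A strict compression strictly decreases the total size. -/
lemma sum_card_compression_lt (a : α) (𝓕 : Finset (Finset α)) (hne : 𝓓 a 𝓕 ≠ 𝓕) :
    ∑ G ∈ 𝓓 a 𝓕, G.card < ∑ F ∈ 𝓕, F.card := by
  set B : Finset (Finset α) := 𝓕.filter (fun s => s.erase a ∉ 𝓕) with hB
  have hmemB : ∀ s ∈ B, a ∈ s := by
    intro s hs
    rw [hB, mem_filter] at hs
    by_contra ha
    exact hs.2 (by rw [erase_eq_of_notMem ha]; exact hs.1)
  have hBne : B.Nonempty := by
    rw [nonempty_iff_ne_empty]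
    intro hempty
    apply hne
    apply compression_eq_of_filter_empty
    intro s hs
    by_contra h'
    exact (notMem_empty s) (hempty ▸ (mem_filter.2 ⟨hs, h'⟩ : s ∈ B))
  have hdecomp : ∑ G ∈ 𝓓 a 𝓕, G.card
      = (∑ s ∈ 𝓕.filter (fun s => s.erase a ∈ 𝓕), s.card) + ∑ s ∈ B, (s.erase a).card := by
    rw [Down.compression, sum_disjUnion, filter_image]
    congr 1
    refine Finset.sum_image ?_
    intro x hx y hy hxy
    rw [mem_coe, mem_filter] at hx hy
    exact Finset.erase_injOn' a (hmemB x (mem_filter.2 hx)) (hmemB y (mem_filter.2 hy)) hxy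
  rw [hdecomp]
  have hsplit : ∑ F ∈ 𝓕, F.card
      = (∑ s ∈ 𝓕.filter (fun s => s.erase a ∈ 𝓕), s.card) + ∑ s ∈ B, s.card := by
    rw [hB]
    exact (Finset.sum_filter_add_sum_filter_not 𝓕 _ _).symm
  rw [hsplit]
  apply Nat.add_lt_add_left
  apply Finset.sum_lt_sum_of_nonempty hBne
  intro s hs
  rw [card_erase_of_mem (hmemB s hs)]
  have : 0 < s.card := card_pos.2 ⟨a, hmemB s hs⟩
  omega

/-- Compression does not increase the trace on any set. -/
lemma traceOn_compression_card_le (a : α) (𝓕 : Finset (Finset α)) (T : Finset α) :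
    (traceOn (𝓓 a 𝓕) T).card ≤ (traceOn 𝓕 T).card := by
  by_cases haT : a ∈ T
  · have hsub : traceOn (𝓓 a 𝓕) T ⊆ 𝓓 a (traceOn 𝓕 T) := by
      intro S hS
      obtain ⟨G, hG, rfl⟩ := mem_traceOn.1 hS
      rcases Down.mem_compression.1 hG with ⟨hG𝓕, hGe⟩ | ⟨hG𝓕, hins⟩
      · refine Down.mem_compression.2 (Or.inl ⟨mem_traceOn.2 ⟨G, hG𝓕, rfl⟩, ?_⟩)
        refine mem_traceOn.2 ⟨G.erase a, hGe, ?_⟩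
        rw [erase_inter]
      · have haG : a ∉ G := fun h => hG𝓕 (by rwa [insert_eq_of_mem h] at hins)
        have haGT : a ∉ G ∩ T := fun h => haG (mem_inter.1 h).1
        have hins' : insert a (G ∩ T) ∈ traceOn 𝓕 T := by
          refine mem_traceOn.2 ⟨insert a G, hins, ?_⟩
          rw [insert_inter_of_mem haT]
        by_cases hGT : G ∩ T ∈ traceOn 𝓕 T
        · exact Down.mem_compression.2 (Or.inl ⟨hGT, by rwa [erase_eq_of_notMem haGT]⟩)
        · exact Down.mem_compression.2 (Or.inr ⟨hGT, hins'⟩)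
    calc (traceOn (𝓓 a 𝓕) T).card ≤ (𝓓 a (traceOn 𝓕 T)).card := card_le_card hsub
      _ = (traceOn 𝓕 T).card := Down.card_compression a _
  · apply card_le_card
    intro S hS
    obtain ⟨G, hG, rfl⟩ := mem_traceOn.1 hS
    rcases Down.mem_compression.1 hG with ⟨hG𝓕, -⟩ | ⟨-, hins⟩
    · exact mem_traceOn.2 ⟨G, hG𝓕, rfl⟩
    · exact mem_traceOn.2 ⟨insert a G, hins, by rw [insert_inter_of_notMem haT]⟩

/-- Any family can be replaced by a hereditary family of the same size in the same ground set
with pointwise smaller traces. -/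
lemma exists_hereditary (V : Finset α) :
    ∀ N : ℕ, ∀ 𝓕 : Finset (Finset α), (∑ F ∈ 𝓕, F.card) ≤ N → 𝓕 ⊆ V.powerset →
    ∃ 𝓖 : Finset (Finset α), 𝓖 ⊆ V.powerset ∧ Hereditary 𝓖 ∧ 𝓖.card = 𝓕.card ∧
      ∀ T : Finset α, (traceOn 𝓖 T).card ≤ (traceOn 𝓕 T).card := by
  intro N
  induction N using Nat.strong_induction_on with
  | _ N ih =>
    intro 𝓕 hsum h𝓕
    by_cases hfix : ∀ x : α, ∀ F ∈ 𝓕, F.erase x ∈ 𝓕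
    · exact ⟨𝓕, h𝓕, hereditary_of_erase hfix, rfl, fun T => le_rfl⟩
    · push_neg at hfix
      obtain ⟨x, F, hF, hFe⟩ := hfix
      have hne : 𝓓 x 𝓕 ≠ 𝓕 := fun h => hFe (h ▸ Down.erase_mem_compression hF)
      have hlt : ∑ G ∈ 𝓓 x 𝓕, G.card < N :=
        lt_of_lt_of_le (sum_card_compression_lt x 𝓕 hne) hsum
      have hpow : 𝓓 x 𝓕 ⊆ V.powerset := by
        intro G hG
        rcases Down.mem_compression.1 hG with ⟨hG𝓕, -⟩ | ⟨-, hins⟩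
        · exact h𝓕 hG𝓕
        · rw [mem_powerset]
          exact (subset_insert x G).trans (mem_powerset.1 (h𝓕 hins))
      obtain ⟨𝓖, h1, h2, h3, h4⟩ :=
        ih (∑ G ∈ 𝓓 x 𝓕, G.card) hlt (𝓓 x 𝓕) le_rfl hpow
      exact ⟨𝓖, h1, h2, h3.trans (Down.card_compression x 𝓕), fun T =>
        (h4 T).trans (traceOn_compression_card_le x 𝓕 T)⟩

end Aux

/-- Frankl's reduction lemma: the arrowing relation `(n,m) → (a,b)` holds for all families
if and only if it holds for all hereditary families. -/
theorem hereditary_reduction (n m a b : ℕ) :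
    (∀ V : Finset ℕ, V.card = n →
      ∀ 𝓕 : Finset (Finset ℕ), 𝓕 ⊆ V.powerset → Hereditary 𝓕 → m ≤ 𝓕.card →
        ∃ T ⊆ V, T.card = a ∧ b ≤ (traceOn 𝓕 T).card) ↔
    (∀ V : Finset ℕ, V.card = n →
      ∀ 𝓕 : Finset (Finset ℕ), 𝓕 ⊆ V.powerset → m ≤ 𝓕.card →
        ∃ T ⊆ V, T.card = a ∧ b ≤ (traceOn 𝓕 T).card) := by
  constructor
  · intro H V hV 𝓕 h𝓕 hm
    obtain ⟨𝓖, h1, h2, h3, h4⟩ :=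
      exists_hereditary V (∑ F ∈ 𝓕, F.card) 𝓕 le_rfl h𝓕
    obtain ⟨T, hTV, hTa, hTb⟩ := H V hV 𝓖 h1 h2 (h3 ▸ hm)
    exact ⟨T, hTV, hTa, hTb.trans (h4 T)⟩
  · intro H V hV 𝓕 h𝓕 _ hm
    exact H V hV 𝓕 h𝓕 hm
end

section
/- Let f : ℕ → ℝ be a monotone non-increasing function, let V be a finite set, and let 𝓕 be a hereditary family of subsets of V with |𝓕| = m. Then Σ_{F ∈ 𝓕} f(|F|) ≥ Σ_{R ∈ R(m)} f(|R|). -/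
/-- `colexInit m` is the family of the first `m` finite subsets of `ℕ` in colexicographic
order; a finite set `A ⊆ ℕ` has colexicographic rank `∑ i ∈ A, 2 ^ i`. -/
def colexInit (m : ℕ) : Finset (Finset ℕ) :=
  (Finset.range m).powerset.filter fun A => ∑ i ∈ A, 2 ^ i < m

namespace KGKK
open Finset

/-! ### Popcount -/

/-- popcount: the number of ones in the binary expansion. -/
def pc (n : ℕ) : ℕ := (Nat.digits 2 n).sum

lemma pc_zero : pc 0 = 0 := by simp [pc]

lemma pc_rec (n : ℕ) (h : n ≠ 0) : pc n = pc (n / 2) + n % 2 := by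
  unfold pc
  rw [Nat.digits_def' (by norm_num : 1 < 2) (Nat.pos_of_ne_zero h)]
  simp [Nat.add_comm]

lemma pc_two_mul (x : ℕ) : pc (2 * x) = pc x := by
  rcases Nat.eq_zero_or_pos x with rfl | hx
  · simp
  · rw [pc_rec (2 * x) (by omega)]
    simp [Nat.mul_div_cancel_left, Nat.mul_mod_right]

lemma pc_two_mul_add_one (x : ℕ) : pc (2 * x + 1) = pc x + 1 := by
  rw [pc_rec (2 * x + 1) (by omega)]
  have h1 : (2 * x + 1) / 2 = x := by omega
  have h2 : (2 * x + 1) % 2 = 1 := by omega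
  rw [h1, h2]

lemma pc_pos (n : ℕ) (h : n ≠ 0) : 0 < pc n := by
  induction n using Nat.strong_induction_on with
  | _ n ih =>
    rw [pc_rec n h]
    rcases Nat.eq_zero_or_pos (n % 2) with h2 | h2
    · have hd : n / 2 ≠ 0 := by omega
      have := ih (n / 2) (by omega) hd
      omega
    · omega

lemma pc_le (n : ℕ) : pc n ≤ n := by
  induction n using Nat.strong_induction_on with
  | _ n ih =>
    rcases Nat.eq_zero_or_pos n with rfl | hn
    · simp [pc_zero]
    · rw [pc_rec n (by omega)]
      have := ih (n / 2) (by omega)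
      omega

lemma pc_add_pow (m : ℕ) : ∀ x, x < 2 ^ m → pc (x + 2 ^ m) = pc x + 1 := by
  induction m with
  | zero =>
    intro x hx
    interval_cases x
    show pc (0 + 1) = pc 0 + 1
    rw [pc_rec 1 one_ne_zero]
  | succ m ih =>
    intro x hx
    have hp : 2 ^ (m + 1) = 2 ^ m * 2 := pow_succ 2 m
    rcases Nat.even_or_odd x with ⟨x', rfl⟩ | ⟨x', rfl⟩
    · have h : x' + x' + 2 ^ (m + 1) = 2 * (x' + 2 ^ m) := by omega
      rw [h, pc_two_mul, ih x' (by omega),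
        show x' + x' = 2 * x' by ring, pc_two_mul]
    · have h : 2 * x' + 1 + 2 ^ (m + 1) = 2 * (x' + 2 ^ m) + 1 := by omega
      rw [h, pc_two_mul_add_one, ih x' (by omega), pc_two_mul_add_one]

/-! ### Interval popcount counting -/

/-- indicator that `pc n < K` -/
def ind (n K : ℕ) : ℕ := if pc n < K then 1 else 0

/-- number of `j ∈ [a, a+b)` with `pc j < K` -/
def c (a b K : ℕ) : ℕ := ∑ j ∈ range b, ind (a + j) K

lemma ind_le_one (n K : ℕ) : ind n K ≤ 1 := by unfold ind; split <;> omega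

lemma ind_zero (n : ℕ) : ind n 0 = 0 := by simp [ind]

lemma ind_mono (n : ℕ) {K K' : ℕ} (h : K ≤ K') : ind n K ≤ ind n K' := by
  unfold ind; split <;> [skip; omega]
  rw [if_pos (by omega)]

lemma ind_even (x K : ℕ) : ind (2 * x) K = ind x K := by simp [ind, pc_two_mul]

lemma ind_odd (x K : ℕ) : ind (2 * x + 1) K = ind x (K - 1) := by
  unfold ind
  rw [pc_two_mul_add_one]
  congr 1
  simp only [eq_iff_iff]
  omega

lemma c_zero_b (a K : ℕ) : c a 0 K = 0 := by simp [c]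

lemma c_zero_K (a b : ℕ) : c a b 0 = 0 := by simp [c, ind_zero]

lemma c_succ_right (a b K : ℕ) : c a (b + 1) K = c a b K + ind (a + b) K := by
  simp [c, Finset.sum_range_succ]

lemma c_succ_left (a b K : ℕ) : c a (b + 1) K = ind a K + c (a + 1) b K := by
  unfold c
  rw [Finset.sum_range_succ']
  simp only [Nat.add_zero]
  rw [add_comm]
  congr 1
  apply Finset.sum_congr rfl
  intro j _
  congr 1
  omega

lemma c_mono_K (a b : ℕ) {K K' : ℕ} (h : K ≤ K') : c a b K ≤ c a b K' :=
  Finset.sum_le_sum fun j _ => ind_mono _ h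

lemma c_add (a b₁ b₂ K : ℕ) : c a (b₁ + b₂) K = c a b₁ K + c (a + b₁) b₂ K := by
  induction b₂ with
  | zero => simp [c_zero_b]
  | succ n ih =>
    rw [show b₁ + (n + 1) = (b₁ + n) + 1 by ring, c_succ_right, ih, c_succ_right,
      add_assoc, ← add_assoc a b₁ n]

lemma c_split (a b' K : ℕ) :
    c a (2 * b') K = ∑ t ∈ range b', (ind (a + 2 * t) K + ind (a + 2 * t + 1) K) := by
  induction b' with
  | zero => simp [c_zero_b]
  | succ n ih =>
    rw [show 2 * (n + 1) = 2 * n + 1 + 1 by ring, c_succ_right, c_succ_right, ih,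
      Finset.sum_range_succ, ← add_assoc a (2 * n) 1, add_assoc]

lemma c_even_even (a' b' K : ℕ) : c (2 * a') (2 * b') K = c a' b' K + c a' b' (K - 1) := by
  rw [c_split]
  unfold c
  rw [← Finset.sum_add_distrib]
  refine Finset.sum_congr rfl fun t _ => ?_
  rw [show 2 * a' + 2 * t = 2 * (a' + t) by ring, ind_even, ind_odd]

lemma c_odd_even (a' b' K : ℕ) :
    c (2 * a' + 1) (2 * b') K = c a' b' (K - 1) + c (a' + 1) b' K := by
  rw [c_split]
  unfold c
  rw [← Finset.sum_add_distrib]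
  refine Finset.sum_congr rfl fun t _ => ?_
  rw [show 2 * a' + 1 + 2 * t = 2 * (a' + t) + 1 by ring, ind_odd,
    show 2 * (a' + t) + 1 + 1 = 2 * (a' + 1 + t) by ring, ind_even]

lemma c_one (a K : ℕ) : c a 1 K = ind a K := by
  rw [show (1:ℕ) = 0 + 1 from rfl, c_succ_right, c_zero_b]
  simp

lemma ind_zero_arg (K : ℕ) : ind 0 K = if 0 < K then 1 else 0 := by
  simp [ind, pc_zero]

/-- The key numerical inequality: for `b ≤ a`, the interval `[a, a+b)` contains at most as
many numbers with popcount `≤ K` as `[0, b)` contains numbers with popcount `< K`. -/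
theorem keyE : ∀ b a K, b ≤ a → c a b (K + 1) ≤ c 0 b K := by
  intro b
  induction b using Nat.strong_induction_on with
  | _ b ih =>
    have ih' : ∀ b' < b, ∀ a K, b' ≤ a → c a b' K ≤ c 0 b' (K - 1) := by
      intro b' hb' a K h
      cases K with
      | zero => simp [c_zero_K]
      | succ K => simpa using ih b' hb' a K h
    intro a K hba
    rcases Nat.lt_or_ge b 2 with hb2 | hb2
    · -- b = 0 or 1
      interval_cases b
      · simp [c_zero_b]
      · rw [c_one, c_one, ind_zero_arg]
        rcases Nat.eq_zero_or_pos K with rfl | hK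
        · rw [if_neg (by omega)]
          unfold ind
          rw [if_neg]
          have := pc_pos a (by omega)
          omega
        · rw [if_pos hK]
          exact ind_le_one _ _
    · obtain ⟨b', hb | hb⟩ := Nat.even_or_odd' b <;> subst hb
      · -- b = 2 * b'
        have hb' : 0 < b' := by omega
        have hRHS : c 0 (2 * b') K = c 0 b' K + c 0 b' (K - 1) := by
          rw [show (0:ℕ) = 2 * 0 from rfl, c_even_even]
        obtain ⟨a', ha | ha⟩ := Nat.even_or_odd' a <;> subst ha
        · have h1 : c a' b' (K + 1) ≤ c 0 b' K := ih b' (by omega) a' K (by omega)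
          have h2 : c a' b' K ≤ c 0 b' (K - 1) := ih' b' (by omega) a' K (by omega)
          have hL : c (2 * a') (2 * b') (K + 1) = c a' b' (K + 1) + c a' b' K := by
            rw [c_even_even]
            simp
          omega
        · have h1 : c a' b' K ≤ c 0 b' (K - 1) := ih' b' (by omega) a' K (by omega)
          have h2 : c (a' + 1) b' (K + 1) ≤ c 0 b' K := ih b' (by omega) (a' + 1) K (by omega)
          have hL : c (2 * a' + 1) (2 * b') (K + 1) = c a' b' K + c (a' + 1) b' (K + 1) := by
            rw [c_odd_even]
            simp
          omega
      · -- b = 2 * b' + 1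
        have hb' : 0 < b' := by omega
        have hRHS : c 0 (2 * b' + 1) K = c 0 b' K + c 0 b' (K - 1) + ind b' K := by
          rw [c_succ_right, show (0:ℕ) = 2 * 0 from rfl, c_even_even,
            show 2 * 0 + 2 * b' = 2 * b' by ring, ind_even]
        obtain ⟨a', ha | ha⟩ := Nat.even_or_odd' a <;> subst ha
        · have hL : c (2 * a') (2 * b' + 1) (K + 1)
              = c a' (b' + 1) (K + 1) + c a' b' K := by
            rw [c_succ_right, c_even_even, show 2 * a' + 2 * b' = 2 * (a' + b') by ring,
              ind_even, c_succ_right a' b']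
            simp
            omega
          have h1 : c a' (b' + 1) (K + 1) ≤ c 0 (b' + 1) K :=
            ih (b' + 1) (by omega) a' K (by omega)
          have h2 : c a' b' K ≤ c 0 b' (K - 1) := ih' b' (by omega) a' K (by omega)
          have h3 : c 0 (b' + 1) K = c 0 b' K + ind b' K := by
            rw [c_succ_right]
            simp
          omega
        · have hL : c (2 * a' + 1) (2 * b' + 1) (K + 1)
              = c a' (b' + 1) K + c (a' + 1) b' (K + 1) := by
            rw [c_succ_right, c_odd_even, show 2 * a' + 1 + 2 * b' = 2 * (a' + b') + 1 by ring,
              ind_odd, c_succ_right a' b']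
            simp
            omega
          have h2 : c (a' + 1) b' (K + 1) ≤ c 0 b' K := ih b' (by omega) (a' + 1) K (by omega)
          have h1 : c a' (b' + 1) K ≤ ind b' K + c 0 b' (K - 1) := by
            rcases Nat.lt_or_ge b' a' with hc | hc
            · have := ih' (b' + 1) (by omega) a' K (by omega)
              have h4 : c 0 (b' + 1) (K - 1) = c 0 b' (K - 1) + ind b' (K - 1) := by
                rw [c_succ_right]
                simp
              have h5 : ind b' (K - 1) ≤ ind b' K := ind_mono _ (by omega)
              omega
            · have ha' : a' = b' := by omega
              subst ha'
              rw [c_succ_left]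
              have := ih' a' (by omega) (a' + 1) K (by omega)
              omega
          omega

/-! ### Binary representation of naturals as finite sets -/

/-- colex rank of a finite set -/
def rank (A : Finset ℕ) : ℕ := ∑ i ∈ A, 2 ^ i

lemma two_pow_le_rank {A : Finset ℕ} {i : ℕ} (h : i ∈ A) : 2 ^ i ≤ rank A :=
  Finset.single_le_sum (fun _ _ => Nat.zero_le _) h

lemma sum_range_two_pow (n : ℕ) : ∑ i ∈ range n, 2 ^ i = 2 ^ n - 1 := by
  induction n with
  | zero => simp
  | succ n ih =>
    rw [Finset.sum_range_succ, ih]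
    have : 1 ≤ 2 ^ n := Nat.one_le_two_pow
    have : 2 ^ (n + 1) = 2 ^ n * 2 := pow_succ 2 n
    omega

lemma rank_lt_two_pow {A : Finset ℕ} {n : ℕ} (h : A ⊆ range n) : rank A < 2 ^ n := by
  have h1 : rank A ≤ ∑ i ∈ range n, 2 ^ i :=
    Finset.sum_le_sum_of_subset h
  rw [sum_range_two_pow] at h1
  have : 1 ≤ 2 ^ n := Nat.one_le_two_pow
  omega

lemma pc_rank : ∀ (n : ℕ) (A : Finset ℕ), A ⊆ range n → pc (rank A) = A.card := by
  intro n
  induction n with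
  | zero =>
    intro A hA
    rw [Finset.range_zero, Finset.subset_empty] at hA
    subst hA
    simp [rank, pc_zero]
  | succ n ih =>
    intro A hA
    by_cases hn : n ∈ A
    · have hsub : A.erase n ⊆ range n := by
        intro i hi
        have h1 := Finset.mem_of_mem_erase hi
        have h2 := Finset.ne_of_mem_erase hi
        have := hA h1
        rw [Finset.mem_range] at *
        omega
      have hr : rank (A.erase n) + 2 ^ n = rank A := by
        unfold rank
        exact Finset.sum_erase_add _ _ hn
      rw [← hr, pc_add_pow n _ (rank_lt_two_pow hsub), ih _ hsub,
        Finset.card_erase_of_mem hn]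
      have : 0 < A.card := Finset.card_pos.2 ⟨n, hn⟩
      omega
    · apply ih
      intro i hi
      have := hA hi
      rw [Finset.mem_range] at *
      rcases Nat.lt_or_ge i n with h | h
      · exact h
      · exfalso; have : i = n := by omega
        subst this; exact hn hi

lemma rank_injOn : ∀ (n : ℕ) (A B : Finset ℕ), A ⊆ range n → B ⊆ range n →
    rank A = rank B → A = B := by
  intro n
  induction n with
  | zero =>
    intro A B hA hB _
    rw [Finset.range_zero, Finset.subset_empty] at hA hB
    rw [hA, hB]
  | succ n ih =>
    intro A B hA hB hr
    have key : ∀ C : Finset ℕ, C ⊆ range (n + 1) → (n ∈ C ↔ 2 ^ n ≤ rank C) := by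
      intro C hC
      constructor
      · exact fun h => two_pow_le_rank h
      · intro h
        by_contra hn
        have : C ⊆ range n := by
          intro i hi
          have := hC hi
          rw [Finset.mem_range] at *
          rcases Nat.lt_or_ge i n with h' | h'
          · exact h'
          · exfalso; have : i = n := by omega
            subst this; exact hn hi
        have := rank_lt_two_pow this
        omega
    have hmem : n ∈ A ↔ n ∈ B := by rw [key A hA, key B hB, hr]
    by_cases hn : n ∈ A
    · have hnB : n ∈ B := hmem.1 hn
      have hsub : ∀ (C : Finset ℕ), C ⊆ range (n+1) → C.erase n ⊆ range n := by
        intro C hC i hi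
        have h1 := Finset.mem_of_mem_erase hi
        have h2 := Finset.ne_of_mem_erase hi
        have := hC h1
        rw [Finset.mem_range] at *
        omega
      have hrA : rank (A.erase n) + 2 ^ n = rank A := Finset.sum_erase_add _ _ hn
      have hrB : rank (B.erase n) + 2 ^ n = rank B := Finset.sum_erase_add _ _ hnB
      have : A.erase n = B.erase n :=
        ih _ _ (hsub A hA) (hsub B hB) (by omega)
      rw [← Finset.insert_erase hn, ← Finset.insert_erase hnB, this]
    · have hnB : n ∉ B := fun h => hn (hmem.2 h)
      have hsubA : A ⊆ range n := by
        intro i hi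
        have := hA hi
        rw [Finset.mem_range] at *
        rcases Nat.lt_or_ge i n with h' | h'
        · exact h'
        · exfalso; have : i = n := by omega
          subst this; exact hn hi
      have hsubB : B ⊆ range n := by
        intro i hi
        have := hB hi
        rw [Finset.mem_range] at *
        rcases Nat.lt_or_ge i n with h' | h'
        · exact h'
        · exfalso; have : i = n := by omega
          subst this; exact hnB hi
      exact ih _ _ hsubA hsubB hr

/-- the finite set with colex rank `n` -/
def bset : ℕ → Finset ℕ
  | 0 => ∅
  | (n+1) => ((bset ((n+1)/2)).image (· + 1)) ∪ (if (n+1) % 2 = 1 then {0} else ∅)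
  decreasing_by exact Nat.div_lt_self (Nat.succ_pos n) one_lt_two

lemma bset_disj (A : Finset ℕ) (s : Finset ℕ) (hs : s ⊆ {0}) :
    Disjoint (A.image (· + 1)) s := by
  rw [Finset.disjoint_left]
  intro i hi his
  have := hs his
  rw [Finset.mem_singleton] at this
  subst this
  rw [Finset.mem_image] at hi
  obtain ⟨j, _, hj⟩ := hi
  omega

lemma rank_image_succ (A : Finset ℕ) : rank (A.image (· + 1)) = 2 * rank A := by
  unfold rank
  rw [Finset.sum_image (by intro x _ y _ h; have h' : x + 1 = y + 1 := h; omega)]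
  rw [Finset.mul_sum]
  apply Finset.sum_congr rfl
  intro i _
  rw [pow_succ]
  ring

lemma rank_bset : ∀ n, rank (bset n) = n := by
  intro n
  induction n using Nat.strong_induction_on with
  | _ n ih =>
    match n with
    | 0 => simp [bset, rank]
    | n + 1 =>
      rw [bset]
      unfold rank
      rw [Finset.sum_union (bset_disj _ _ (by split <;> simp))]
      have h1 : rank ((bset ((n+1)/2)).image (· + 1)) = 2 * ((n+1)/2) := by
        rw [rank_image_succ, ih ((n+1)/2) (Nat.div_lt_self (Nat.succ_pos n) one_lt_two)]
      unfold rank at h1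
      rw [h1]
      have h2 : (∑ i ∈ (if (n+1) % 2 = 1 then ({0} : Finset ℕ) else ∅), 2 ^ i) = (n+1) % 2 := by
        split <;> simp_all <;> omega
      rw [h2]
      omega

lemma card_bset : ∀ n, (bset n).card = pc n := by
  intro n
  induction n using Nat.strong_induction_on with
  | _ n ih =>
    match n with
    | 0 => simp [bset, pc_zero]
    | n + 1 =>
      rw [bset]
      rw [Finset.card_union_of_disjoint (bset_disj _ _ (by split <;> simp))]
      rw [Finset.card_image_of_injective _ (add_left_injective 1)]
      rw [ih ((n+1)/2) (Nat.div_lt_self (Nat.succ_pos n) one_lt_two)]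
      rw [pc_rec (n+1) (Nat.succ_ne_zero n)]
      congr 1
      split <;> simp_all <;> omega

lemma bset_subset_range (n : ℕ) : bset n ⊆ range n := by
  intro i hi
  have h1 : 2 ^ i ≤ n := by rw [← rank_bset n]; exact two_pow_le_rank hi
  have h2 : i < 2 ^ i := Nat.lt_two_pow_self
  rw [Finset.mem_range]
  omega

/-! ### colexInit as an image -/

lemma bset_inj {r r' : ℕ} (h : bset r = bset r') : r = r' := by
  rw [← rank_bset r, ← rank_bset r', h]

lemma colexInit_eq_image (m : ℕ) : colexInit m = (range m).image bset := by
  ext A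
  simp only [colexInit, Finset.mem_filter, Finset.mem_powerset, Finset.mem_image,
    Finset.mem_range]
  constructor
  · rintro ⟨hsub, hrank⟩
    have hR : rank A < m := hrank
    refine ⟨rank A, hrank, ?_⟩
    apply rank_injOn m _ _ (subset_trans (bset_subset_range _) (by
      intro i hi; rw [Finset.mem_range] at hi ⊢; omega)) hsub (rank_bset _)
  · rintro ⟨r, hr, rfl⟩
    refine ⟨subset_trans (bset_subset_range r) (by
      intro i hi; rw [Finset.mem_range] at *; omega), ?_⟩
    show rank (bset r) < m
    rw [rank_bset]
    exact hr

lemma sum_colexInit (m : ℕ) (f : ℕ → ℝ) :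
    ∑ R ∈ colexInit m, f R.card = ∑ r ∈ range m, f (pc r) := by
  rw [colexInit_eq_image, Finset.sum_image (fun x _ y _ h => bset_inj h)]
  exact Finset.sum_congr rfl fun r _ => by rw [card_bset]

/-! ### The counting lemma for hereditary families -/

theorem count_lemma {α : Type*} [DecidableEq α] :
    ∀ (m : ℕ) (𝓕 : Finset (Finset α)), Hereditary 𝓕 → 𝓕.card = m →
      ∀ k : ℕ, c 0 m k ≤ (𝓕.filter fun F => F.card < k).card := by
  intro m
  induction m using Nat.strong_induction_on with
  | _ m ih =>
    intro 𝓕 hher hcard k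
    by_cases hex : ∃ F ∈ 𝓕, F.Nonempty
    · obtain ⟨F₀, hF₀, x, hx⟩ := hex
      set 𝓕₀ := 𝓕.filter (fun F => x ∉ F) with h𝓕₀
      set 𝓖 := 𝓕.filter (fun F => x ∈ F) with h𝓖
      set 𝓕₁ := 𝓖.image (fun F => F.erase x) with h𝓕₁
      have hmem₁ : ∀ G : Finset α, G ∈ 𝓕₁ ↔ x ∉ G ∧ insert x G ∈ 𝓕 := by
        intro G
        rw [h𝓕₁, Finset.mem_image]
        constructor
        · rintro ⟨F, hF, rfl⟩
          rw [h𝓖, Finset.mem_filter] at hF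
          exact ⟨Finset.notMem_erase x F, by rw [Finset.insert_erase hF.2]; exact hF.1⟩
        · rintro ⟨hxG, hins⟩
          refine ⟨insert x G, ?_, ?_⟩
          · rw [h𝓖, Finset.mem_filter]
            exact ⟨hins, Finset.mem_insert_self x G⟩
          · rw [Finset.erase_insert hxG]
      have hsub₁₀ : 𝓕₁ ⊆ 𝓕₀ := by
        intro G hG
        rw [hmem₁] at hG
        rw [h𝓕₀, Finset.mem_filter]
        exact ⟨hher _ hG.2 G (Finset.subset_insert x G), hG.1⟩
      have hinjG : Set.InjOn (fun F : Finset α => F.erase x) (↑𝓖 : Set (Finset α)) := by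
        intro F hF F' hF' h
        have h' : F.erase x = F'.erase x := h
        simp only [Finset.coe_filter, Set.mem_setOf_eq, h𝓖] at hF hF'
        rw [← Finset.insert_erase hF.2, ← Finset.insert_erase hF'.2, h']
      have hcard₁ : 𝓕₁.card = 𝓖.card := Finset.card_image_of_injOn hinjG
      have hcardsplit : 𝓕₀.card + 𝓖.card = m := by
        rw [← hcard, h𝓕₀, h𝓖]
        rw [add_comm]
        exact Finset.card_filter_add_card_filter_not (fun F => x ∈ F)
      have hG_pos : 0 < 𝓖.card := Finset.card_pos.2 ⟨F₀, by
        rw [h𝓖, Finset.mem_filter]; exact ⟨hF₀, hx⟩⟩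
      set a := 𝓕₀.card with ha
      set b := 𝓕₁.card with hb
      have hba : b ≤ a := Finset.card_le_card hsub₁₀
      have hbm : b < m := by omega
      have ham : a < m := by omega
      have hm : m = a + b := by omega
      -- hereditary subfamilies
      have hher₀ : Hereditary 𝓕₀ := by
        intro F hF F' hF'
        rw [h𝓕₀, Finset.mem_filter] at hF ⊢
        exact ⟨hher F hF.1 F' hF', fun hxF' => hF.2 (hF' hxF')⟩
      have hher₁ : Hereditary 𝓕₁ := by
        intro G hG G' hG'
        rw [hmem₁] at hG ⊢
        refine ⟨fun hxG' => hG.1 (hG' hxG'), ?_⟩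
        exact hher _ hG.2 _ (Finset.insert_subset_insert x hG')
      rcases Nat.eq_zero_or_pos k with rfl | hk
      · rw [c_zero_K]; omega
      obtain ⟨k', rfl⟩ : ∃ k', k = k' + 1 := ⟨k - 1, by omega⟩
      -- counting in the family
      have hcount : (𝓕.filter fun F => F.card < k' + 1).card
          = (𝓕₀.filter fun F => F.card < k' + 1).card
            + (𝓕₁.filter fun G => G.card < k').card := by
        have hs : (𝓕₁.filter fun G => G.card < k').card
            = (𝓖.filter fun F => F.card < k' + 1).card := by
          rw [h𝓕₁, Finset.filter_image]
          rw [Finset.card_image_of_injOn (hinjG.mono (by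
            intro F hF
            exact Finset.mem_coe.2 (Finset.mem_of_mem_filter F (Finset.mem_coe.1 hF))))]
          congr 1
          apply Finset.filter_congr
          intro F hF
          rw [h𝓖, Finset.mem_filter] at hF
          rw [Finset.card_erase_of_mem hF.2]
          have : 0 < F.card := Finset.card_pos.2 ⟨x, hF.2⟩
          omega
        rw [hs]
        have hpart := Finset.card_filter_add_card_filter_not
          (s := 𝓕.filter (fun F => F.card < k' + 1)) (p := fun F => x ∈ F)
        have e1 : (𝓕.filter fun F => F.card < k' + 1).filter (fun F => x ∈ F)
            = 𝓖.filter (fun F => F.card < k' + 1) := Finset.filter_comm _ _ _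
        have e2 : (𝓕.filter fun F => F.card < k' + 1).filter (fun F => ¬ x ∈ F)
            = 𝓕₀.filter (fun F => F.card < k' + 1) := Finset.filter_comm _ _ _
        rw [e1, e2] at hpart
        omega
      have ih₀ := ih a ham 𝓕₀ hher₀ rfl (k' + 1)
      have ih₁ := ih b hbm 𝓕₁ hher₁ rfl k'
      have hnum : c 0 m (k' + 1) ≤ c 0 a (k' + 1) + c 0 b k' := by
        rw [hm, c_add, Nat.zero_add]
        have := keyE b a k' hba
        omega
      omega
    · -- all members are empty
      push_neg at hex
      have h𝓕 : 𝓕 ⊆ {∅} := by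
        intro F hF
        rw [Finset.mem_singleton]
        by_contra h
        exact absurd (Finset.nonempty_iff_ne_empty.2 h) (by simpa using hex F hF)
      have : m ≤ 1 := hcard ▸ le_trans (Finset.card_le_card h𝓕) (by simp)
      interval_cases m
      · rw [c_zero_b]; omega
      · have h1 : 𝓕 = {∅} := by
          apply Finset.eq_of_subset_of_card_le h𝓕
          rw [hcard]
          simp
        rw [c_one, h1]
        rcases Nat.eq_zero_or_pos k with rfl | hk
        · simp [ind_zero]
        · have h2 : ({∅} : Finset (Finset α)).filter (fun F => F.card < k) = {∅} := by
            rw [Finset.filter_singleton, if_pos (by simpa using hk)]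
          rw [h2]
          simpa using ind_le_one 0 k

/-! ### Abel summation -/

lemma tele (f : ℕ → ℝ) (a : ℕ) :
    ∀ b, a ≤ b → ∑ j ∈ Ico a b, (f j - f (j + 1)) = f a - f b := by
  refine Nat.le_induction ?_ ?_
  · simp
  · intro b hab ih
    rw [Finset.sum_Ico_succ_top hab, ih]
    ring

lemma abel {ι : Type*} [DecidableEq ι] (f : ℕ → ℝ) (s : Finset ι) (g : ι → ℕ) (B : ℕ)
    (hB : ∀ i ∈ s, g i < B) :
    ∑ i ∈ s, f (g i) = s.card * f B
      + ∑ j ∈ range B, (f j - f (j + 1)) * ((s.filter fun i => g i ≤ j).card) := by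
  have hper : ∀ i ∈ s, f (g i)
      = f B + ∑ j ∈ range B, if g i ≤ j then (f j - f (j + 1)) else 0 := by
    intro i hi
    rw [← Finset.sum_filter]
    have hset : (range B).filter (fun j => g i ≤ j) = Ico (g i) B := by
      ext j
      simp only [Finset.mem_filter, Finset.mem_range, Finset.mem_Ico]
      omega
    rw [hset, tele f (g i) B (le_of_lt (hB i hi))]
    ring
  rw [Finset.sum_congr rfl hper, Finset.sum_add_distrib, Finset.sum_const, nsmul_eq_mul]
  congr 1
  rw [Finset.sum_comm]
  apply Finset.sum_congr rfl
  intro j _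
  rw [← Finset.sum_filter, Finset.sum_const, nsmul_eq_mul, mul_comm]

lemma c0_card (b K : ℕ) : c 0 b K = ((range b).filter fun r => pc r < K).card := by
  rw [Finset.card_filter]
  unfold c ind
  apply Finset.sum_congr rfl
  intro j _
  rw [Nat.zero_add]

end KGKK

/-- Katona's generalisation of the Kruskal–Katona theorem: for a monotone non-increasing
`f : ℕ → ℝ` and a hereditary family `𝓕` with `|𝓕| = m`, we have
`∑_{F ∈ 𝓕} f(|F|) ≥ ∑_{R ∈ R(m)} f(|R|)`. -/
theorem katona_generalised_kruskal_katona {α : Type*} [DecidableEq α]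
    (f : ℕ → ℝ) (hf : Antitone f) (V : Finset α) (m : ℕ)
    (𝓕 : Finset (Finset α)) (h𝓕 : 𝓕 ⊆ V.powerset) (hher : Hereditary 𝓕)
    (hcard : 𝓕.card = m) :
    ∑ R ∈ colexInit m, f R.card ≤ ∑ F ∈ 𝓕, f F.card := by
  set B := V.card + m + 1 with hB
  have hFb : ∀ F ∈ 𝓕, F.card < B := by
    intro F hF
    have := Finset.card_le_card (Finset.mem_powerset.1 (h𝓕 hF))
    omega
  have hRb : ∀ r ∈ Finset.range m, KGKK.pc r < B := by
    intro r hr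
    rw [Finset.mem_range] at hr
    have := KGKK.pc_le r
    omega
  rw [KGKK.sum_colexInit m f,
    KGKK.abel f (Finset.range m) KGKK.pc B hRb,
    KGKK.abel f 𝓕 (fun F => F.card) B hFb,
    Finset.card_range, hcard]
  apply add_le_add_right
  apply Finset.sum_le_sum
  intro j _
  have hcnt : ((Finset.range m).filter fun r => KGKK.pc r ≤ j).card
      ≤ (𝓕.filter fun F => F.card ≤ j).card := by
    have h1 := KGKK.count_lemma m 𝓕 hher hcard (j + 1)
    have h2 : KGKK.c 0 m (j + 1) = ((Finset.range m).filter fun r => KGKK.pc r ≤ j).card := by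
      rw [KGKK.c0_card]
      congr 1
      apply Finset.filter_congr
      intro r _
      simp [Nat.lt_succ_iff]
    have h3 : (𝓕.filter fun F => F.card < j + 1) = 𝓕.filter fun F => F.card ≤ j := by
      apply Finset.filter_congr
      intro F _
      simp [Nat.lt_succ_iff]
    rw [h2] at h1
    rw [← h3]
    exact h1
  have hnn : (0:ℝ) ≤ f j - f (j + 1) := sub_nonneg.2 (hf (Nat.le_succ j))
  exact mul_le_mul_of_nonneg_left (Nat.cast_le.2 hcnt) hnn
end

section
/- Let d ≥ 4 and c ≤ 2^d be natural numbers, let V be a finite set, and let 𝓗 be a hereditary family of subsets of V with |𝓗| ≥ 2^d − c. Then Σ_{H ∈ 𝓗} 1/(|H| + 1) ≥ W(2^d − c). -/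
/-- `W m = ∑_{R ∈ R(m)} 1/(|R| + 1)`. -/
noncomputable def W (m : ℕ) : ℝ :=
  ∑ R ∈ colexInit m, (1 : ℝ) / (R.card + 1)

namespace WL

def rk (A : Finset ℕ) : ℕ := ∑ i ∈ A, 2 ^ i

lemma pow_le_rk {A : Finset ℕ} {i : ℕ} (h : i ∈ A) : 2 ^ i ≤ rk A :=
  Finset.single_le_sum (fun j _ => Nat.zero_le _) h

lemma subset_range_of_rk_lt {A : Finset ℕ} {k : ℕ} (h : rk A < 2 ^ k) :
    A ⊆ Finset.range k := by
  intro i hi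
  rw [Finset.mem_range]
  by_contra hik
  push_neg at hik
  exact absurd (le_trans (Nat.pow_le_pow_right (by norm_num) hik) (pow_le_rk hi)) (by omega)

lemma sum_range_two_pow (k : ℕ) : ∑ i ∈ Finset.range k, 2 ^ i = 2 ^ k - 1 := by
  induction k with
  | zero => simp
  | succ n ih =>
    rw [Finset.sum_range_succ, ih]
    have : 1 ≤ 2 ^ n := Nat.one_le_two_pow
    have : 2 ^ (n + 1) = 2 * 2 ^ n := by ring
    omega

lemma rk_lt_of_subset_range {A : Finset ℕ} {k : ℕ} (h : A ⊆ Finset.range k) :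
    rk A < 2 ^ k := by
  have h1 : rk A ≤ ∑ i ∈ Finset.range k, 2 ^ i :=
    Finset.sum_le_sum_of_subset h
  rw [sum_range_two_pow] at h1
  have : 1 ≤ 2 ^ k := Nat.one_le_two_pow
  omega

lemma mem_colexInit {m : ℕ} {A : Finset ℕ} : A ∈ colexInit m ↔ rk A < m := by
  simp only [colexInit, Finset.mem_filter, Finset.mem_powerset]
  constructor
  · exact fun h => h.2
  · intro h
    refine ⟨fun i hi => ?_, h⟩
    rw [Finset.mem_range]
    have h1 : 2 ^ i ≤ rk A := pow_le_rk hi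
    have h2 : i < 2 ^ i := Nat.lt_two_pow_self
    omega

lemma colexInit_eq_union {k m : ℕ} (h1 : 2 ^ k ≤ m) (h2 : m ≤ 2 ^ (k + 1)) :
    colexInit m = colexInit (2 ^ k) ∪ (colexInit (m - 2 ^ k)).image (insert k) := by
  ext A
  simp only [Finset.mem_union, Finset.mem_image, mem_colexInit]
  constructor
  · intro hA
    by_cases h : rk A < 2 ^ k
    · exact Or.inl h
    · push_neg at h
      right
      have hsub : A ⊆ Finset.range (k + 1) := subset_range_of_rk_lt (lt_of_lt_of_le hA h2)
      have hk : k ∈ A := by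
        by_contra hk
        have hsub' : A ⊆ Finset.range k := by
          intro i hi
          have := Finset.mem_range.1 (hsub hi)
          rw [Finset.mem_range]
          rcases Nat.lt_or_ge i k with h' | h'
          · exact h'
          · have : i = k := by omega
            subst this
            exact absurd hi hk
        exact absurd (rk_lt_of_subset_range hsub') (not_lt.2 h)
      refine ⟨A.erase k, ?_, Finset.insert_erase hk⟩
      have hsum : rk (A.erase k) + 2 ^ k = rk A := Finset.sum_erase_add A _ hk
      omega
  · rintro (h | ⟨B, hB, rfl⟩)
    · omega
    · have hkB : k ∉ B := by
        intro hkB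
        have := pow_le_rk hkB
        omega
      have : rk (insert k B) = 2 ^ k + rk B := Finset.sum_insert hkB
      omega

lemma colexInit_disj {k m : ℕ} :
    Disjoint (colexInit (2 ^ k)) ((colexInit (m - 2 ^ k)).image (insert k)) := by
  rw [Finset.disjoint_left]
  rintro A hA hA'
  simp only [Finset.mem_image] at hA'
  obtain ⟨B, _, rfl⟩ := hA'
  have := subset_range_of_rk_lt (mem_colexInit.1 hA) (Finset.mem_insert_self k B)
  simp at this

noncomputable def g (x : ℝ) (m : ℕ) : ℝ := ∑ R ∈ colexInit m, x ^ R.card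

lemma g_nonneg {x : ℝ} (hx0 : 0 ≤ x) (m : ℕ) : 0 ≤ g x m :=
  Finset.sum_nonneg fun _ _ => pow_nonneg hx0 _

lemma g_mono {x : ℝ} (hx0 : 0 ≤ x) {m m' : ℕ} (h : m ≤ m') : g x m ≤ g x m' := by
  apply Finset.sum_le_sum_of_subset_of_nonneg
  · intro A hA
    rw [mem_colexInit] at *
    omega
  · exact fun _ _ _ => pow_nonneg hx0 _

lemma g_zero (x : ℝ) : g x 0 = 0 := by
  have : colexInit 0 = ∅ := by
    ext A; simp [mem_colexInit]
  simp [g, this]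

lemma g_one (x : ℝ) : g x 1 = 1 := by
  have : colexInit 1 = {∅} := by
    ext A
    simp only [mem_colexInit, Finset.mem_singleton]
    constructor
    · intro h
      have : rk A = 0 := by omega
      by_contra hne
      obtain ⟨i, hi⟩ := Finset.nonempty_iff_ne_empty.2 hne
      have := pow_le_rk hi
      have := Nat.one_le_two_pow (n := i)
      omega
    · rintro rfl; simp [rk]
  simp [g, this]

lemma g_split {x : ℝ} {k m : ℕ} (h1 : 2 ^ k ≤ m) (h2 : m ≤ 2 ^ (k + 1)) :
    g x m = g x (2 ^ k) + x * g x (m - 2 ^ k) := by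
  unfold g
  rw [colexInit_eq_union h1 h2, Finset.sum_union colexInit_disj]
  congr 1
  rw [Finset.sum_image]
  · rw [Finset.mul_sum]
    apply Finset.sum_congr rfl
    intro B hB
    have hkB : k ∉ B := by
      intro hkB
      have h3 := pow_le_rk hkB
      have h4 := mem_colexInit.1 hB
      omega
    rw [Finset.card_insert_of_notMem hkB, pow_succ, mul_comm]
  · intro B hB B' hB' hEq
    have hkB : k ∉ B := by
      intro hkB
      have h3 := pow_le_rk hkB
      have h4 := mem_colexInit.1 hB
      omega
    have hkB' : k ∉ B' := by
      intro hkB'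
      have h3 := pow_le_rk hkB'
      have h4 := mem_colexInit.1 hB'
      omega
    rw [← Finset.erase_insert hkB, ← Finset.erase_insert hkB', hEq]


lemma gT {x : ℝ} (hx0 : 0 ≤ x) (hx1 : x ≤ 1) :
    ∀ j s t, s ≤ 2 ^ j → t ≤ 2 ^ j → 2 ^ j ≤ s + t →
    (∀ s' t', s' + t' < 2 ^ j → g x (s' + t') ≤ g x s' + g x t') →
    g x (2 ^ j) + g x (s + t - 2 ^ j) ≤ g x s + g x t := by
  intro j
  induction j with
  | zero =>
    intro s t hs ht hst _
    simp only [pow_zero] at *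
    interval_cases s <;> interval_cases t <;> simp_all [g_zero, g_one]
  | succ j IH =>
    have hp : (2:ℕ) ^ (j + 1) = 2 ^ j + 2 ^ j := by ring
    have hP1 : (1:ℕ) ≤ 2 ^ j := Nat.one_le_two_pow
    have main : ∀ s t, t ≤ s → s ≤ 2 ^ (j+1) → t ≤ 2 ^ (j+1) → 2 ^ (j+1) ≤ s + t →
        (∀ s' t', s' + t' < 2 ^ (j+1) → g x (s' + t') ≤ g x s' + g x t') →
        g x (2 ^ (j+1)) + g x (s + t - 2 ^ (j+1)) ≤ g x s + g x t := by
      intro s t hts hs ht hst hS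
      have hsj : 2 ^ j ≤ s := by omega
      have hgs : g x s = g x (2 ^ j) + x * g x (s - 2 ^ j) := g_split hsj hs
      have hg2 : g x (2 ^ (j+1)) = g x (2 ^ j) + x * g x (2 ^ j) := by
        have h := g_split (x := x) (k := j) (m := 2 ^ (j+1)) (by omega) le_rfl
        have hidx : 2 ^ (j+1) - 2 ^ j = 2 ^ j := by omega
        rwa [hidx] at h
      rcases le_or_gt (2 ^ j) t with htj | htj
      · have hgt : g x t = g x (2 ^ j) + x * g x (t - 2 ^ j) := g_split htj ht
        have hu : s + t - 2 ^ (j+1) = (s - 2 ^ j) + (t - 2 ^ j) := by omega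
        rcases le_or_gt (2 ^ j) ((s - 2 ^ j) + (t - 2 ^ j)) with huj | huj
        · have hgu : g x ((s - 2 ^ j) + (t - 2 ^ j)) =
              g x (2 ^ j) + x * g x ((s - 2 ^ j) + (t - 2 ^ j) - 2 ^ j) :=
            g_split huj (by omega)
          have hT := IH (s - 2 ^ j) (t - 2 ^ j) (by omega) (by omega) huj
            (fun a b hab => hS a b (by omega))
          have hxT := mul_le_mul_of_nonneg_left hT hx0
          rw [hu, hgu, hgs, hgt, hg2]
          nlinarith [hxT]
        · have hsub : g x ((s - 2 ^ j) + (t - 2 ^ j)) ≤ g x (s - 2 ^ j) + g x (t - 2 ^ j) :=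
            hS _ _ (by omega)
          have hmono : g x ((s - 2 ^ j) + (t - 2 ^ j)) ≤ g x (2 ^ j) :=
            g_mono hx0 (le_of_lt huj)
          have hx2 : x * g x ((s - 2 ^ j) + (t - 2 ^ j)) ≤
              x * (g x (s - 2 ^ j) + g x (t - 2 ^ j)) := mul_le_mul_of_nonneg_left hsub hx0
          have h1 : 0 ≤ (1 - x) * (g x (2 ^ j) - g x ((s - 2 ^ j) + (t - 2 ^ j))) :=
            mul_nonneg (by linarith) (by linarith)
          rw [hu, hgs, hgt, hg2]
          nlinarith
      · have hu : s + t - 2 ^ (j+1) = (s - 2 ^ j) + t - 2 ^ j := by omega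
        have hT := IH (s - 2 ^ j) t (by omega) (le_of_lt htj) (by omega)
          (fun a b hab => hS a b (by omega))
        have hmono : g x (s - 2 ^ j) ≤ g x (2 ^ j) := g_mono hx0 (by omega)
        have h1 : 0 ≤ (1 - x) * (g x (2 ^ j) - g x (s - 2 ^ j)) :=
          mul_nonneg (by linarith) (by linarith)
        rw [hu, hgs, hg2]
        nlinarith [hT]
    intro s t hs ht hst hS
    rcases le_total t s with hts | hst'
    · exact main s t hts hs ht hst hS
    · have h := main t s hst' ht hs (by omega) hS
      have hidx : t + s - 2 ^ (j+1) = s + t - 2 ^ (j+1) := by omega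
      rw [hidx] at h
      linarith

lemma gN {x : ℝ} (hx0 : 0 ≤ x) (hx1 : x ≤ 1) (m : ℕ) :
    ∀ a b, a + b = m → b ≤ a → g x (a + b) ≤ g x a + x * g x b := by
  induction m using Nat.strong_induction_on with
  | _ m IH =>
    intro a b hm hba
    have hS : ∀ s t, s + t < m → g x (s + t) ≤ g x s + g x t := by
      intro s t h
      rcases le_total t s with h' | h'
      · have h1 := IH (s + t) h s t rfl h'
        nlinarith [g_nonneg hx0 t]
      · have h1 := IH (s + t) h t s (by omega) h'
        have : g x (t + s) = g x (s + t) := by rw [Nat.add_comm]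
        nlinarith [g_nonneg hx0 s]
    rcases Nat.eq_zero_or_pos b with hb0 | hb1
    · subst hb0
      simp only [Nat.add_zero, g_zero, mul_zero, add_zero, le_refl]
    · have hm2 : 2 ≤ m := by omega
      obtain ⟨k, hk1, hk2⟩ : ∃ k, 2 ^ k ≤ m ∧ m < 2 ^ (k + 1) :=
        ⟨Nat.log 2 m, Nat.pow_log_le_self 2 (by omega), Nat.lt_pow_succ_log_self (by norm_num) m⟩
      have hkpos : 1 ≤ k := by
        by_contra h
        have : k = 0 := by omega
        rw [this] at hk2
        norm_num at hk2
        omega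
      rw [hm]
      rcases le_or_gt (2 ^ k) a with hak | hak
      · have hgm : g x m = g x (2 ^ k) + x * g x (m - 2 ^ k) := g_split hk1 (le_of_lt hk2)
        have hga : g x a = g x (2 ^ k) + x * g x (a - 2 ^ k) := g_split hak (by omega)
        have hkey := hS (a - 2 ^ k) b (by have := Nat.one_le_two_pow (n := k); omega)
        have hidx : (a - 2 ^ k) + b = m - 2 ^ k := by omega
        rw [hidx] at hkey
        have hxkey := mul_le_mul_of_nonneg_left hkey hx0
        rw [hgm, hga]
        nlinarith
      · obtain ⟨j, hkj⟩ : ∃ j, k = j + 1 := ⟨k - 1, by omega⟩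
        subst hkj
        have hp : (2:ℕ) ^ (j + 1) = 2 ^ j + 2 ^ j := by ring
        have hP1 : (1:ℕ) ≤ 2 ^ j := Nat.one_le_two_pow
        have haj : 2 ^ j ≤ a := by omega
        have hga : g x a = g x (2 ^ j) + x * g x (a - 2 ^ j) := g_split haj (by omega)
        have hgm : g x m = g x (2 ^ (j + 1)) + x * g x (m - 2 ^ (j + 1)) :=
          g_split hk1 (le_of_lt hk2)
        have hg2 : g x (2 ^ (j + 1)) = g x (2 ^ j) + x * g x (2 ^ j) := by
          have h := g_split (x := x) (k := j) (m := 2 ^ (j + 1)) (by omega) le_rfl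
          have hidx : 2 ^ (j + 1) - 2 ^ j = 2 ^ j := by omega
          rwa [hidx] at h
        rcases le_or_gt b (2 ^ j) with hbj | hbj
        · have hkey := gT hx0 hx1 j (a - 2 ^ j) b (by omega) hbj (by omega)
            (fun s' t' h => hS s' t' (by omega))
          have hidx : (a - 2 ^ j) + b - 2 ^ j = m - 2 ^ (j + 1) := by omega
          rw [hidx] at hkey
          have hxkey := mul_le_mul_of_nonneg_left hkey hx0
          rw [hgm, hga, hg2]
          nlinarith
        · have hgb : g x b = g x (2 ^ j) + x * g x (b - 2 ^ j) :=
            g_split (le_of_lt hbj) (by omega)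
          have hkey := IH (m - 2 ^ (j + 1)) (by omega) (a - 2 ^ j) (b - 2 ^ j)
            (by omega) (by omega)
          have hidx : (a - 2 ^ j) + (b - 2 ^ j) = m - 2 ^ (j + 1) := by omega
          rw [hidx] at hkey
          have hxkey := mul_le_mul_of_nonneg_left hkey hx0
          rw [hgm, hga, hg2, hgb]
          nlinarith [g_nonneg hx0 (b - 2 ^ j), mul_nonneg hx0 hx0]


lemma gC {α : Type*} [DecidableEq α] {x : ℝ} (hx0 : 0 ≤ x) (hx1 : x ≤ 1) (n : ℕ) :
    ∀ (𝓗 : Finset (Finset α)), 𝓗.card = n → Hereditary 𝓗 →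
      g x (𝓗.card) ≤ ∑ H ∈ 𝓗, x ^ H.card := by
  induction n using Nat.strong_induction_on with
  | _ n IH =>
    intro 𝓗 hn hher
    by_cases hflat : ∀ H ∈ 𝓗, H = ∅
    · have hsub : 𝓗 ⊆ {∅} := fun H hH => Finset.mem_singleton.2 (hflat H hH)
      have hcard : 𝓗.card ≤ 1 := le_trans (Finset.card_le_card hsub) (by simp)
      interval_cases h : 𝓗.card
      · rw [g_zero]
        exact Finset.sum_nonneg fun _ _ => pow_nonneg hx0 _
      · have h𝓗 : 𝓗 = {∅} := Finset.eq_of_subset_of_card_le hsub (by simp [h])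
        rw [g_one, h𝓗]
        simp
    · push_neg at hflat
      obtain ⟨H0, hH0, hH0ne⟩ := hflat
      obtain ⟨v, hv⟩ := hH0ne
      set 𝓗₀ := 𝓗.filter (fun A => v ∉ A) with h𝓗₀
      set 𝓗₁ := (𝓗.filter (fun A => v ∈ A)).image (fun A => A.erase v) with h𝓗₁
      have hinj : ∀ A ∈ 𝓗.filter (fun A => v ∈ A), ∀ A' ∈ 𝓗.filter (fun A => v ∈ A),
          A.erase v = A'.erase v → A = A' := by
        intro A hA A' hA' hEq
        have h1 : v ∈ A := (Finset.mem_filter.1 hA).2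
        have h2 : v ∈ A' := (Finset.mem_filter.1 hA').2
        rw [← Finset.insert_erase h1, ← Finset.insert_erase h2, hEq]
      have hcard1 : 𝓗₁.card = (𝓗.filter (fun A => v ∈ A)).card :=
        Finset.card_image_of_injOn hinj
      have hcards : 𝓗₀.card + 𝓗₁.card = 𝓗.card := by
        rw [hcard1, h𝓗₀, Nat.add_comm]
        exact Finset.card_filter_add_card_filter_not (fun A => v ∈ A)
      have hmem1 : ∀ B ∈ 𝓗₁, B ∈ 𝓗 ∧ v ∉ B := by
        intro B hB
        rw [h𝓗₁, Finset.mem_image] at hB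
        obtain ⟨A, hA, rfl⟩ := hB
        obtain ⟨hA𝓗, hvA⟩ := Finset.mem_filter.1 hA
        exact ⟨hher A hA𝓗 _ (Finset.erase_subset _ _), Finset.notMem_erase _ _⟩
      have hsub10 : 𝓗₁ ⊆ 𝓗₀ := by
        intro B hB
        obtain ⟨h1, h2⟩ := hmem1 B hB
        exact Finset.mem_filter.2 ⟨h1, h2⟩
      have hher0 : Hereditary 𝓗₀ := by
        intro F hF F' hF'
        obtain ⟨h1, h2⟩ := Finset.mem_filter.1 hF
        exact Finset.mem_filter.2 ⟨hher F h1 F' hF', fun hvF' => h2 (hF' hvF')⟩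
      have hher1 : Hereditary 𝓗₁ := by
        intro F hF F' hF'
        rw [h𝓗₁, Finset.mem_image] at hF
        obtain ⟨A, hA, rfl⟩ := hF
        obtain ⟨hA𝓗, hvA⟩ := Finset.mem_filter.1 hA
        have hvF' : v ∉ F' := fun hc => Finset.notMem_erase v A (hF' hc)
        have hins : insert v F' ⊆ A := by
          intro i hi
          rcases Finset.mem_insert.1 hi with rfl | hi'
          · exact hvA
          · exact Finset.erase_subset _ _ (hF' hi')
        have hins𝓗 : insert v F' ∈ 𝓗 := hher A hA𝓗 _ hins
        rw [h𝓗₁, Finset.mem_image]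
        refine ⟨insert v F', Finset.mem_filter.2 ⟨hins𝓗, Finset.mem_insert_self _ _⟩, ?_⟩
        exact Finset.erase_insert hvF'
      have hlt0 : 𝓗₀.card < n := by
        rw [← hn]
        apply Finset.card_lt_card
        rw [Finset.ssubset_iff_of_subset (Finset.filter_subset _ _)]
        exact ⟨H0, hH0, by simp [hv]⟩
      have hlt1 : 𝓗₁.card < n := lt_of_le_of_lt (Finset.card_le_card hsub10) hlt0
      have hIH0 := IH 𝓗₀.card hlt0 𝓗₀ rfl hher0
      have hIH1 := IH 𝓗₁.card hlt1 𝓗₁ rfl hher1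
      -- sum split
      have hsplit : ∑ H ∈ 𝓗, x ^ H.card =
          (∑ H ∈ 𝓗₀, x ^ H.card) + ∑ B ∈ 𝓗₁, x ^ (B.card + 1) := by
        rw [h𝓗₁, Finset.sum_image hinj, h𝓗₀]
        rw [← Finset.sum_filter_add_sum_filter_not 𝓗 (fun A => v ∉ A)]
        congr 1
        · apply Finset.sum_congr
          · ext A; simp [not_not]
          · intro A hA
            have hvA : v ∈ A := by
              simp only [Finset.mem_filter, not_not] at hA
              exact hA.2
            have hApos : 0 < A.card := Finset.card_pos.2 ⟨v, hvA⟩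
            rw [Finset.card_erase_of_mem hvA]
            congr 1
            omega
      have hx1' : ∑ B ∈ 𝓗₁, x ^ (B.card + 1) = x * ∑ B ∈ 𝓗₁, x ^ B.card := by
        rw [Finset.mul_sum]
        exact Finset.sum_congr rfl fun B _ => by rw [pow_succ, mul_comm]
      have hN := gN hx0 hx1 (𝓗₀.card + 𝓗₁.card) 𝓗₀.card 𝓗₁.card rfl
        (Finset.card_le_card hsub10)
      rw [hcards] at hN
      have hxIH1 := mul_le_mul_of_nonneg_left hIH1 hx0
      rw [hsplit, hx1']
      linarith

end WL

lemma sum_weight_eq_integral {β : Type*} (s : Finset β) (f : β → ℕ) :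
    ∑ b ∈ s, (1:ℝ)/(f b + 1) = ∫ x in (0:ℝ)..1, ∑ b ∈ s, x ^ f b := by
  rw [intervalIntegral.integral_finset_sum (fun i _ => (continuous_pow (f i)).intervalIntegrable 0 1)]
  apply Finset.sum_congr rfl
  intro b _
  rw [integral_pow]
  norm_num


/-- Lemma 3.1(1): if `d ≥ 4`, `c ≤ 2^d` and `𝓗` is a hereditary family with
`|𝓗| ≥ 2^d − c`, then `∑_{H ∈ 𝓗} 1/(|H| + 1) ≥ W(2^d − c)`. -/
theorem weight_lemma_basic {α : Type*} [DecidableEq α] (d c : ℕ)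
    (hd : 4 ≤ d) (hc : c ≤ 2 ^ d) (V : Finset α)
    (𝓗 : Finset (Finset α)) (h𝓗 : 𝓗 ⊆ V.powerset) (hher : Hereditary 𝓗)
    (hcard : 2 ^ d - c ≤ 𝓗.card) :
    W (2 ^ d - c) ≤ ∑ H ∈ 𝓗, (1 : ℝ) / (H.card + 1) := by
  set m := 2 ^ d - c with hm
  have h1 : W m = ∫ x in (0:ℝ)..1, WL.g x m := by
    rw [W]
    exact sum_weight_eq_integral (colexInit m) Finset.card
  have h2 : ∑ H ∈ 𝓗, (1:ℝ)/(H.card + 1) = ∫ x in (0:ℝ)..1, ∑ H ∈ 𝓗, x ^ H.card :=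
    sum_weight_eq_integral 𝓗 Finset.card
  rw [h1, h2]
  apply intervalIntegral.integral_mono_on (by norm_num)
  · exact (continuous_finset_sum _ (fun i _ => continuous_pow _)).intervalIntegrable 0 1
  · exact (continuous_finset_sum _ (fun i _ => continuous_pow _)).intervalIntegrable 0 1
  · rintro x ⟨hx0, hx1⟩
    calc WL.g x m ≤ WL.g x 𝓗.card := WL.g_mono hx0 hcard
    _ ≤ _ := WL.gC hx0 hx1 𝓗.card 𝓗 rfl hher
end

section
/- Let d ≥ 4 and c ≤ 2^d be natural numbers, let V be a finite set, and let 𝓗 be a hereditary family of subsets of V with |𝓗| ≥ 2^d − c. If at least d + 1 vertices of V are non-isolated in 𝓗 (i.e. each lies in some member of 𝓗), then Σ_{H ∈ 𝓗} 1/(|H| + 1) ≥ W(2^d − c) + 1/6. -/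
open Finset


/-- popcount -/
def pc (n : ℕ) : ℕ := (Nat.bitIndices n).length

@[simp] lemma pc_zero : pc 0 = 0 := by simp [pc]

lemma pc_two_mul (n : ℕ) : pc (2 * n) = pc n := by simp [pc]

lemma pc_two_mul_add_one (n : ℕ) : pc (2 * n + 1) = pc n + 1 := by simp [pc]

lemma pc_one : pc 1 = 1 := by simp [pc]

lemma pc_two_pow_add {k i : ℕ} (h : i < 2 ^ k) : pc (2 ^ k + i) = pc i + 1 := by
  induction k generalizing i with
  | zero => interval_cases i; simp [pc]
  | succ k ih =>
    rcases Nat.even_or_odd i with ⟨j, hj⟩ | ⟨j, hj⟩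
    · subst hj
      have hj2 : j < 2 ^ k := by omega
      have : 2 ^ (k+1) + (j + j) = 2 * (2 ^ k + j) := by ring
      rw [this, pc_two_mul, ih hj2, ← two_mul, pc_two_mul]
    · subst hj
      have hj2 : j < 2 ^ k := by have := Nat.pow_lt_pow_succ (a := 2) (n := k) one_lt_two; omega
      have : 2 ^ (k+1) + (2 * j + 1) = 2 * (2 ^ k + j) + 1 := by ring
      rw [this, pc_two_mul_add_one, ih hj2, pc_two_mul_add_one]

lemma pc_two_pow (k : ℕ) : pc (2 ^ k) = 1 := by
  simpa using pc_two_pow_add (k := k) (i := 0) (by positivity)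

noncomputable def wf (t s : ℕ) : ℝ := 1 / (s + t)

noncomputable def ws (t m : ℕ) : ℝ := ∑ j ∈ Finset.range m, wf t (pc j)

lemma wf_pos {t : ℕ} (ht : 1 ≤ t) (s : ℕ) : 0 < wf t s := by
  have h1 : (1:ℝ) ≤ (t:ℝ) := by exact_mod_cast ht
  have : (0:ℝ) < (s:ℝ) + t := by positivity
  exact div_pos one_pos this

lemma wf_succ (t s : ℕ) : wf (t + 1) s = wf t (s + 1) := by
  unfold wf; push_cast; ring_nf

lemma wf_anti {t : ℕ} (ht : 1 ≤ t) (s : ℕ) : wf (t + 1) s ≤ wf t s := by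
  unfold wf
  apply one_div_le_one_div_of_le
  · have : (1:ℝ) ≤ t := by exact_mod_cast ht
    positivity
  · push_cast; linarith

lemma ws_mono (t : ℕ) {a b : ℕ} (ht : 1 ≤ t) (h : a ≤ b) : ws t a ≤ ws t b := by
  unfold ws
  apply Finset.sum_le_sum_of_subset_of_nonneg (Finset.range_subset_range.2 h)
  intro i _ _
  exact (wf_pos ht _).le

lemma sum_pc_parity (g : ℕ → ℝ) (a : ℕ) : ∀ b : ℕ,
    ∑ j ∈ Finset.Ico a b, g (pc j)
      = ∑ i ∈ Finset.Ico ((a+1)/2) ((b+1)/2), g (pc i)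
        + ∑ i ∈ Finset.Ico (a/2) (b/2), g (pc i + 1) := by
  intro b
  induction b with
  | zero => simp
  | succ b ih =>
    by_cases hab : a ≤ b
    · rw [Finset.sum_Ico_succ_top hab, ih]
      rcases Nat.even_or_odd b with ⟨i, hi⟩ | ⟨i, hi⟩
      · have h1 : (b+1+1)/2 = ((b+1)/2) + 1 := by omega
        have h2 : (b+1)/2 = i := by omega
        have h3 : b / 2 = i := by omega
        have hpc : pc b = pc i := by
          have hb : b = 2 * i := by omega
          rw [hb, pc_two_mul]
        rw [h1, h2, h3, Finset.sum_Ico_succ_top (show (a+1)/2 ≤ i by omega), hpc]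
        ring
      · have h1 : (b+1+1)/2 = (b+1)/2 := by omega
        have h2 : (b+1)/2 = i + 1 := by omega
        have h3 : b / 2 = i := by omega
        have hpc : pc b = pc i + 1 := by
          have hb : b = 2 * i + 1 := by omega
          rw [hb, pc_two_mul_add_one]
        rw [h1, h2, h3, Finset.sum_Ico_succ_top (show a/2 ≤ i by omega), hpc]
        ring
    · have e1 : Finset.Ico a (b+1) = ∅ := Finset.Ico_eq_empty (by omega)
      have e2 : Finset.Ico ((a+1)/2) ((b+1+1)/2) = ∅ := Finset.Ico_eq_empty (by omega)
      have e3 : Finset.Ico (a/2) ((b+1)/2) = ∅ := Finset.Ico_eq_empty (by omega)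
      simp [e1, e2, e3]

lemma ws_succ (t m : ℕ) : ws t (m+1) = ws t m + wf t (pc m) := Finset.sum_range_succ _ _

lemma ws_parity (t b : ℕ) : ws t b = ws t ((b+1)/2) + ws (t+1) (b/2) := by
  unfold ws
  rw [Finset.range_eq_Ico, sum_pc_parity (wf t) 0 b, Finset.range_eq_Ico, Finset.range_eq_Ico]
  simp only [Nat.zero_div, ← wf_succ]

lemma L1 (N : ℕ) : ∀ t a b : ℕ, 1 ≤ t → a + b ≤ N → b ≤ a →
    ∑ j ∈ Finset.Ico a (a+b), wf t (pc j) ≤ ws (t+1) b := by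
  induction N with
  | zero =>
    intro t a b ht hm hba
    have hb : b = 0 := by omega
    simp [hb, ws]
  | succ N ih =>
    intro t a b ht hm hba
    by_cases hb0 : b = 0
    · simp [hb0, ws]
    rw [sum_pc_parity (wf t) a (a+b)]
    simp only [← wf_succ]
    by_cases hA : a = b ∧ a % 2 = 1
    · obtain ⟨rfl, hodd⟩ := hA
      set c := a / 2 with hc
      have ha : a = 2 * c + 1 := by omega
      have e1 : (a + a + 1) / 2 = (c+1) + c := by omega
      have e2 : (a+1)/2 = c + 1 := by omega
      have e3 : (a+a)/2 = 2*c + 1 := by omega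
      rw [e1, e2, e3, hc]
      rw [show 2*c+1 = (2*c) + 1 from rfl, Finset.sum_Ico_succ_top (show a/2 ≤ 2*c by omega)]
      have hpc2c : pc (2*c) = pc c := pc_two_mul c
      have i1 : ∑ j ∈ Finset.Ico (c+1) ((c+1)+c), wf t (pc j) ≤ ws (t+1) c :=
        ih t (c+1) c ht (by omega) (by omega)
      have i2 : ∑ j ∈ Finset.Ico (a/2) (2*c), wf (t+1) (pc j) ≤ ws (t+2) c := by
        have : a / 2 = c := hc.symm ▸ rfl
        rw [this, show 2*c = c + c from by ring]
        exact ih (t+1) c c (by omega) (by omega) le_rfl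
      have rhs : ws (t+1) a = ws (t+1) c + wf (t+1) (pc c) + ws (t+2) c := by
        rw [ws_parity (t+1) a, show (a+1)/2 = c+1 from e2, show a/2 = c from by omega,
          ws_succ]
      rw [rhs, hpc2c]
      linarith
    · by_cases hB : a % 2 = 1 ∧ b % 2 = 1
      · -- both odd, b + 2 ≤ a
        have hba2 : b + 2 ≤ a := by omega
        have e1 : (a + b + 1) / 2 = (a+1)/2 + b/2 := by omega
        have e2 : (a+b)/2 = a/2 + (b+1)/2 := by omega
        rw [e1, e2]
        have i1 : ∑ j ∈ Finset.Ico ((a+1)/2) ((a+1)/2 + b/2), wf t (pc j) ≤ ws (t+1) (b/2) :=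
          ih t _ _ ht (by omega) (by omega)
        have i2 : ∑ j ∈ Finset.Ico (a/2) (a/2 + (b+1)/2), wf (t+1) (pc j)
            ≤ ws (t+2) ((b+1)/2) :=
          ih (t+1) _ _ (by omega) (by omega) (by omega)
        have rhs : ws (t+1) b = ws (t+1) (b/2) + wf (t+1) (pc (b/2)) + ws (t+2) (b/2) := by
          rw [ws_parity (t+1) b, show (b+1)/2 = b/2 + 1 from by omega, ws_succ]
        have r2 : ws (t+2) ((b+1)/2) = ws (t+2) (b/2) + wf (t+2) (pc (b/2)) := by
          rw [show (b+1)/2 = b/2 + 1 from by omega, ws_succ]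
        have hw : wf (t+2) (pc (b/2)) ≤ wf (t+1) (pc (b/2)) := wf_anti (by omega) _
        rw [rhs]
        rw [r2] at i2
        linarith
      · -- not both odd
        have e1 : (a + b + 1) / 2 = (a+1)/2 + (b+1)/2 := by omega
        have e2 : (a+b)/2 = a/2 + b/2 := by omega
        rw [e1, e2]
        have i1 : ∑ j ∈ Finset.Ico ((a+1)/2) ((a+1)/2 + (b+1)/2), wf t (pc j)
            ≤ ws (t+1) ((b+1)/2) :=
          ih t _ _ ht (by omega) (by omega)
        have i2 : ∑ j ∈ Finset.Ico (a/2) (a/2 + b/2), wf (t+1) (pc j) ≤ ws (t+2) (b/2) :=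
          ih (t+1) _ _ (by omega) (by omega) (by omega)
        rw [ws_parity (t+1) b]
        linarith

lemma ws_merge {t a b : ℕ} (ht : 1 ≤ t) (hba : b ≤ a) : ws t (a+b) ≤ ws t a + ws (t+1) b := by
  have hsplit : ws t a + ∑ j ∈ Finset.Ico a (a+b), wf t (pc j) = ws t (a+b) := by
    unfold ws
    rw [Finset.range_eq_Ico, Finset.range_eq_Ico]
    exact Finset.sum_Ico_consecutive _ (Nat.zero_le a) (Nat.le_add_right a b)
  linarith [L1 (a+b) t a b ht le_rfl hba]

lemma diff_lb {t s : ℕ} (ht : 1 ≤ t) (hs : 1 ≤ s) :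
    wf t 0 - wf (t+1) 0 ≤ ws t s - ws (t+1) s := by
  have : ws t s - ws (t+1) s = ∑ j ∈ Finset.range s, (wf t (pc j) - wf (t+1) (pc j)) := by
    unfold ws; rw [Finset.sum_sub_distrib]
  rw [this]
  have h0 : (0:ℕ) ∈ Finset.range s := Finset.mem_range.2 hs
  have := Finset.single_le_sum (f := fun j => wf t (pc j) - wf (t+1) (pc j))
    (fun i _ => sub_nonneg.2 (wf_anti ht (pc i))) h0
  simpa [pc_zero] using this

lemma claimF {t r L : ℕ} (ht : 1 ≤ t) (hr : 1 ≤ r) (hL : 1 ≤ L) :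
    ∑ j ∈ Finset.Ico r (r+L), wf t (pc j) ≤ ws t L - (wf t 0 - wf (t+1) 0) := by
  by_cases hLr : L ≤ r
  · have h1 := L1 (r+L) t r L ht le_rfl hLr
    have h2 := diff_lb ht hL
    linarith
  · push_neg at hLr
    have hsplit : ∑ j ∈ Finset.Ico r L, wf t (pc j) + ∑ j ∈ Finset.Ico L (r+L), wf t (pc j)
        = ∑ j ∈ Finset.Ico r (r+L), wf t (pc j) :=
      Finset.sum_Ico_consecutive _ (le_of_lt hLr) (by omega)
    have h1 : ∑ j ∈ Finset.Ico L (r+L), wf t (pc j) ≤ ws (t+1) r := by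
      have := L1 (L+r) t L r ht le_rfl (le_of_lt hLr)
      rwa [show L + r = r + L from by omega] at this
    have h2 : ∑ j ∈ Finset.range r, wf t (pc j) + ∑ j ∈ Finset.Ico r L, wf t (pc j)
        = ws t L := by
      unfold ws
      rw [Finset.range_eq_Ico, Finset.range_eq_Ico]
      exact Finset.sum_Ico_consecutive _ (Nat.zero_le r) (le_of_lt hLr)
    have h3 : wf t 0 - wf (t+1) 0 ≤ ∑ j ∈ Finset.range r, wf t (pc j) - ws (t+1) r :=
      diff_lb ht hr
    linarith

section Family

variable {α : Type*} [DecidableEq α]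

noncomputable def fweight (t : ℕ) (𝓗 : Finset (Finset α)) : ℝ := ∑ H ∈ 𝓗, wf t H.card

def fam0 (v : α) (𝓗 : Finset (Finset α)) : Finset (Finset α) :=
  𝓗.filter (fun H => v ∉ H)

def fam1 (v : α) (𝓗 : Finset (Finset α)) : Finset (Finset α) :=
  (𝓗.filter (fun H => v ∈ H)).image (fun H => H.erase v)

lemma mem_fam1 {v : α} {𝓗 : Finset (Finset α)} {H : Finset α} :
    H ∈ fam1 v 𝓗 ↔ ∃ G ∈ 𝓗, v ∈ G ∧ G.erase v = H := by
  simp only [fam1, Finset.mem_image, Finset.mem_filter]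
  constructor
  · rintro ⟨G, ⟨hG, hv⟩, rfl⟩; exact ⟨G, hG, hv, rfl⟩
  · rintro ⟨G, hG, hv, rfl⟩; exact ⟨G, ⟨hG, hv⟩, rfl⟩

lemma erase_injOn' (v : α) (𝓗 : Finset (Finset α)) :
    ∀ x ∈ 𝓗.filter (fun H => v ∈ H), ∀ y ∈ 𝓗.filter (fun H => v ∈ H),
      x.erase v = y.erase v → x = y := by
  intro x hx y hy h
  rw [Finset.mem_filter] at hx hy
  rw [← Finset.insert_erase hx.2, ← Finset.insert_erase hy.2, h]

lemma fweight_split (t : ℕ) (v : α) (𝓗 : Finset (Finset α)) :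
    fweight t 𝓗 = fweight t (fam0 v 𝓗) + fweight (t+1) (fam1 v 𝓗) := by
  unfold fweight fam0 fam1
  rw [Finset.sum_image (erase_injOn' v 𝓗)]
  have h1 : ∑ G ∈ 𝓗.filter (fun H => v ∈ H), wf (t+1) (G.erase v).card
      = ∑ G ∈ 𝓗.filter (fun H => v ∈ H), wf t G.card := by
    apply Finset.sum_congr rfl
    intro G hG
    rw [Finset.mem_filter] at hG
    rw [wf_succ, Finset.card_erase_add_one hG.2]
  rw [h1]
  have h2 : 𝓗.filter (fun H => ¬ v ∉ H) = 𝓗.filter (fun H => v ∈ H) := by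
    apply Finset.filter_congr; intro H _; simp
  rw [← Finset.sum_filter_add_sum_filter_not 𝓗 (fun H => v ∉ H) (fun H => wf t H.card), h2]

lemma card_split (v : α) (𝓗 : Finset (Finset α)) :
    𝓗.card = (fam0 v 𝓗).card + (fam1 v 𝓗).card := by
  unfold fam0 fam1
  rw [Finset.card_image_of_injOn (fun x hx y hy h => erase_injOn' v 𝓗 x hx y hy h)]
  rw [← Finset.card_filter_add_card_filter_not (s := 𝓗) (p := fun H => v ∈ H)]
  ring

lemma fam1_subset_fam0 {v : α} {𝓗 : Finset (Finset α)} (hher : Hereditary 𝓗) :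
    fam1 v 𝓗 ⊆ fam0 v 𝓗 := by
  intro H hH
  rw [mem_fam1] at hH
  obtain ⟨G, hG, hv, rfl⟩ := hH
  rw [fam0, Finset.mem_filter]
  exact ⟨hher G hG _ (Finset.erase_subset _ _), Finset.notMem_erase _ _⟩

lemma fam0_her {v : α} {𝓗 : Finset (Finset α)} (hher : Hereditary 𝓗) :
    Hereditary (fam0 v 𝓗) := by
  intro F hF F' hF'
  rw [fam0, Finset.mem_filter] at hF ⊢
  exact ⟨hher F hF.1 F' hF', fun hv => hF.2 (hF' hv)⟩

lemma fam1_her {v : α} {𝓗 : Finset (Finset α)} (hher : Hereditary 𝓗) :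
    Hereditary (fam1 v 𝓗) := by
  intro F hF F' hF'
  rw [mem_fam1] at hF ⊢
  obtain ⟨G, hG, hv, rfl⟩ := hF
  refine ⟨insert v F', hher G hG _ ?_, Finset.mem_insert_self _ _, ?_⟩
  · intro x hx
    rcases Finset.mem_insert.1 hx with rfl | hx
    · exact hv
    · exact Finset.erase_subset _ _ (hF' hx)
  · rw [Finset.erase_insert]
    intro hv'
    exact Finset.notMem_erase v G (hF' hv')

lemma mem_supp {a : α} {𝓗 : Finset (Finset α)} :
    a ∈ 𝓗.sup id ↔ ∃ H ∈ 𝓗, a ∈ H := by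
  simp [Finset.mem_sup]

lemma empty_mem {𝓗 : Finset (Finset α)} (hher : Hereditary 𝓗) (hne : 𝓗.Nonempty) :
    ∅ ∈ 𝓗 := by
  obtain ⟨H, hH⟩ := hne
  exact hher H hH ∅ (Finset.empty_subset _)

lemma singleton_mem {a : α} {𝓗 : Finset (Finset α)} (hher : Hereditary 𝓗)
    (ha : a ∈ 𝓗.sup id) : {a} ∈ 𝓗 := by
  rw [mem_supp] at ha
  obtain ⟨H, hH, haH⟩ := ha
  exact hher H hH {a} (Finset.singleton_subset_iff.2 haH)

lemma fam1_nonempty {v : α} {𝓗 : Finset (Finset α)} (hv : v ∈ 𝓗.sup id) :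
    (fam1 v 𝓗).Nonempty := by
  rw [mem_supp] at hv
  obtain ⟨H, hH, hvH⟩ := hv
  exact ⟨H.erase v, mem_fam1.2 ⟨H, hH, hvH, rfl⟩⟩

lemma supp_fam0 {v : α} {𝓗 : Finset (Finset α)} (hher : Hereditary 𝓗) :
    (fam0 v 𝓗).sup id = (𝓗.sup id).erase v := by
  ext a
  rw [Finset.mem_erase, mem_supp, mem_supp]
  constructor
  · rintro ⟨H, hH, haH⟩
    rw [fam0, Finset.mem_filter] at hH
    constructor
    · rintro rfl; exact hH.2 haH
    · exact ⟨H, hH.1, haH⟩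
  · rintro ⟨hav, H, hH, haH⟩
    refine ⟨H.erase v, ?_, Finset.mem_erase.2 ⟨hav, haH⟩⟩
    rw [fam0, Finset.mem_filter]
    exact ⟨hher H hH _ (Finset.erase_subset _ _), Finset.notMem_erase _ _⟩

end Family

lemma lemA_s14 {α : Type*} [DecidableEq α] (N : ℕ) :
    ∀ (𝓗 : Finset (Finset α)) (t : ℕ), Hereditary 𝓗 → 1 ≤ t → 𝓗.card ≤ N →
      ws t 𝓗.card ≤ fweight t 𝓗 := by
  induction N with
  | zero =>
    intro 𝓗 t _ _ hc
    have h0 : 𝓗 = ∅ := Finset.card_eq_zero.1 (by omega)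
    simp [h0, ws, fweight]
  | succ N ih =>
    intro 𝓗 t hher ht hc
    by_cases hne : 𝓗 = ∅
    · simp [hne, ws, fweight]
    by_cases hsup : 𝓗.sup id = ∅
    · have h1 : 𝓗 = {∅} := by
        apply Finset.eq_singleton_iff_nonempty_unique_mem.2
        refine ⟨Finset.nonempty_iff_ne_empty.2 hne, fun H hH => ?_⟩
        have : H ⊆ 𝓗.sup id := Finset.le_sup (f := id) hH
        rw [hsup] at this
        exact Finset.subset_empty.1 this
      rw [h1]
      simp [ws, fweight, Finset.sum_range_one, pc_zero]
    · obtain ⟨v, hv⟩ := Finset.nonempty_iff_ne_empty.2 hsup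
      have hcs := card_split v 𝓗
      have hc1 : 1 ≤ (fam1 v 𝓗).card := Finset.card_pos.2 (fam1_nonempty hv)
      have hc0 : 1 ≤ (fam0 v 𝓗).card := by
        apply Finset.card_pos.2
        refine ⟨∅, ?_⟩
        rw [fam0, Finset.mem_filter]
        exact ⟨empty_mem hher (Finset.nonempty_iff_ne_empty.2 hne), Finset.notMem_empty v⟩
      have hc10 : (fam1 v 𝓗).card ≤ (fam0 v 𝓗).card :=
        Finset.card_le_card (fam1_subset_fam0 hher)
      have i0 := ih (fam0 v 𝓗) t (fam0_her hher) ht (by omega)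
      have i1 := ih (fam1 v 𝓗) (t+1) (fam1_her hher) (by omega) (by omega)
      have hm : ws t 𝓗.card ≤ ws t (fam0 v 𝓗).card + ws (t+1) (fam1 v 𝓗).card := by
        rw [hcs]
        exact ws_merge ht hc10
      rw [fweight_split t v 𝓗]
      linarith

lemma wf_num : wf 1 0 = 1 ∧ wf 1 1 = 1/2 ∧ wf 1 2 = 1/3 ∧ wf 2 0 - wf 3 0 = 1/6 := by
  unfold wf; norm_num

lemma ws_four : ws 1 4 = 7/3 := by
  have p1 : pc 1 = 1 := pc_one
  have p2 : pc 2 = 1 := by rw [show (2:ℕ) = 2*1 from rfl, pc_two_mul, pc_one]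
  have p3 : pc 3 = 2 := by rw [show (3:ℕ) = 2*1+1 from rfl, pc_two_mul_add_one, pc_one]
  unfold ws
  rw [Finset.sum_range_succ, Finset.sum_range_succ, Finset.sum_range_succ,
    Finset.sum_range_one, pc_zero, p1, p2, p3]
  unfold wf; norm_num

lemma lemD {α : Type*} [DecidableEq α] (N : ℕ) :
    ∀ (𝓗 : Finset (Finset α)), Hereditary 𝓗 → 3 ≤ (𝓗.sup id).card →
      𝓗.card ≤ 2 ^ ((𝓗.sup id).card - 1) → 𝓗.card ≤ N →
      ws 1 𝓗.card + 1/6 ≤ fweight 1 𝓗 := by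
  induction N with
  | zero =>
    intro 𝓗 hher hn hpow hc
    exfalso
    have h0 : 𝓗 = ∅ := Finset.card_eq_zero.1 (by omega)
    rw [h0] at hn
    simp at hn
  | succ N ih =>
    intro 𝓗 hher hn hpow hc
    set n := (𝓗.sup id).card with hndef
    by_cases hn4 : 4 ≤ n
    · -- inductive case
      have hsupne : (𝓗.sup id).Nonempty := Finset.card_pos.1 (by omega)
      obtain ⟨v, hv⟩ := hsupne
      have hcs := card_split v 𝓗
      have hc1 : 1 ≤ (fam1 v 𝓗).card := Finset.card_pos.2 (fam1_nonempty hv)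
      have hne : 𝓗 ≠ ∅ := by
        intro h0
        have hs0 : 𝓗.sup id = (∅ : Finset α) := by rw [h0]; rfl
        have : n = 0 := by rw [hndef, hs0]; rfl
        omega
      have hc0 : 1 ≤ (fam0 v 𝓗).card := by
        apply Finset.card_pos.2
        refine ⟨∅, ?_⟩
        rw [fam0, Finset.mem_filter]
        exact ⟨empty_mem hher (Finset.nonempty_iff_ne_empty.2 hne), Finset.notMem_empty v⟩
      have hc10 : (fam1 v 𝓗).card ≤ (fam0 v 𝓗).card :=
        Finset.card_le_card (fam1_subset_fam0 hher)
      have hsupp0 : ((fam0 v 𝓗).sup id).card = n - 1 := by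
        rw [supp_fam0 hher, Finset.card_erase_of_mem hv]
      have i1 : ws 2 (fam1 v 𝓗).card ≤ fweight 2 (fam1 v 𝓗) :=
        lemA_s14 (fam1 v 𝓗).card (fam1 v 𝓗) 2 (fam1_her hher) (by omega) le_rfl
      rw [fweight_split 1 v 𝓗]
      by_cases hcase : (fam0 v 𝓗).card ≤ 2 ^ (n - 2)
      · -- case (i)
        have iD : ws 1 (fam0 v 𝓗).card + 1/6 ≤ fweight 1 (fam0 v 𝓗) := by
          apply ih (fam0 v 𝓗) (fam0_her hher) (by omega)
          · rw [hsupp0]; rwa [show n - 1 - 1 = n - 2 from by omega]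
          · omega
        have hm : ws 1 𝓗.card ≤ ws 1 (fam0 v 𝓗).card + ws 2 (fam1 v 𝓗).card := by
          rw [hcs]
          exact ws_merge le_rfl hc10
        linarith
      · -- case (ii)
        push_neg at hcase
        set c0 := (fam0 v 𝓗).card
        set c1 := (fam1 v 𝓗).card
        set K := 2 ^ (n - 2) with hK
        have hpow2 : 2 ^ (n - 1) = 2 * K := by
          rw [hK, ← pow_succ']
          congr 1
          omega
        have hr1 : K + 1 ≤ c0 := hcase
        set r := c0 - K with hrdef
        have hrc1 : r + c1 ≤ K := by omega
        have i0 : ws 1 c0 ≤ fweight 1 (fam0 v 𝓗) :=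
          lemA_s14 c0 (fam0 v 𝓗) 1 (fam0_her hher) le_rfl le_rfl
        -- key inequality
        have hsum1 : ws 1 𝓗.card = ws 1 c0 + ∑ j ∈ Finset.Ico c0 (c0 + c1), wf 1 (pc j) := by
          rw [hcs]
          unfold ws
          rw [Finset.range_eq_Ico, Finset.range_eq_Ico]
          exact (Finset.sum_Ico_consecutive _ (Nat.zero_le c0) (Nat.le_add_right c0 c1)).symm
        have hreidx : ∑ j ∈ Finset.Ico c0 (c0 + c1), wf 1 (pc j)
            = ∑ i ∈ Finset.Ico r (r + c1), wf 2 (pc i) := by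
          have hmap : Finset.Ico c0 (c0  + c1) =
              (Finset.Ico r (r + c1)).map (addLeftEmbedding K) := by
            rw [Finset.map_add_left_Ico]
            congr 1 <;> omega
          rw [hmap, Finset.sum_map]
          apply Finset.sum_congr rfl
          intro i hi
          rw [Finset.mem_Ico] at hi
          have : pc (K + i) = pc i + 1 := pc_two_pow_add (by omega)
          simp only [addLeftEmbedding_apply]
          rw [this, ← wf_succ]
        have hF : ∑ i ∈ Finset.Ico r (r + c1), wf 2 (pc i)
            ≤ ws 2 c1 - (wf 2 0 - wf 3 0) := claimF (by omega) (by omega) (by omega)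
        have h16 : wf 2 0 - wf 3 0 = 1/6 := wf_num.2.2.2
        linarith
    · -- base case n = 3
      have hn3 : n = 3 := by omega
      obtain ⟨a, b, c, hab, hac, hbc, habc⟩ := Finset.card_eq_three.1 hn3
      have ha : {a} ∈ 𝓗 := singleton_mem hher (by rw [habc]; simp)
      have hb : {b} ∈ 𝓗 := singleton_mem hher (by rw [habc]; simp)
      have hcm : {c} ∈ 𝓗 := singleton_mem hher (by rw [habc]; simp)
      have hem : (∅ : Finset α) ∈ 𝓗 := hher {a} ha ∅ (Finset.empty_subset _)
      have hsub : ({∅, {a}, {b}, {c}} : Finset (Finset α)) ⊆ 𝓗 := by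
        intro H hH
        simp only [Finset.mem_insert, Finset.mem_singleton] at hH
        rcases hH with rfl | rfl | rfl | rfl <;> assumption
      have hTsum : ∑ H ∈ ({∅, {a}, {b}, {c}} : Finset (Finset α)), wf 1 H.card = 5/2 := by
        rw [Finset.sum_insert (by
            simp only [Finset.mem_insert, Finset.mem_singleton, not_or]
            exact ⟨(Finset.singleton_ne_empty a).symm, (Finset.singleton_ne_empty b).symm,
              (Finset.singleton_ne_empty c).symm⟩),
          Finset.sum_insert (by simp [hab, hac]),
          Finset.sum_insert (by simp [hbc]),
          Finset.sum_singleton]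
        simp only [Finset.card_empty, Finset.card_singleton]
        unfold wf; norm_num
      have hwlb : 5/2 ≤ fweight 1 𝓗 := by
        rw [← hTsum]
        apply Finset.sum_le_sum_of_subset_of_nonneg hsub
        intro i _ _
        exact (wf_pos le_rfl _).le
      have hle4 : 𝓗.card ≤ 4 := by
        have : 2 ^ (n - 1) = 4 := by rw [hn3]; norm_num
        omega

      have := ws_mono 1 le_rfl hle4
      rw [ws_four] at this
      linarith

lemma mem_colexInit {m : ℕ} {A : Finset ℕ} : A ∈ colexInit m ↔ ∑ i ∈ A, 2 ^ i < m := by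
  unfold colexInit
  rw [Finset.mem_filter, Finset.mem_powerset]
  constructor
  · exact And.right
  · intro h
    refine ⟨fun i hi => Finset.mem_range.2 ?_, h⟩
    have h2 : 2 ^ i ≤ ∑ i ∈ A, 2 ^ i :=
      Finset.single_le_sum (fun j _ => Nat.zero_le _) hi
    have := Nat.lt_two_pow_self (n := i)
    omega

lemma colexInit_eq (m : ℕ) :
    colexInit m = (Finset.range m).image (fun j => j.bitIndices.toFinset) := by
  ext A
  rw [mem_colexInit, Finset.mem_image]
  constructor
  · intro h
    exact ⟨∑ i ∈ A, 2 ^ i, Finset.mem_range.2 h, Finset.toFinset_bitIndices_twoPowSum A⟩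
  · rintro ⟨j, hj, rfl⟩
    rw [Finset.twoPowSum_toFinset_bitIndices]
    exact Finset.mem_range.1 hj

lemma W_eq (m : ℕ) : W m = ws 1 m := by
  unfold W ws
  rw [colexInit_eq]
  rw [Finset.sum_image (fun x _ y _ h => by
    have hx := Finset.twoPowSum_toFinset_bitIndices x
    have hy := Finset.twoPowSum_toFinset_bitIndices y
    rw [← hx, ← hy, h])]
  apply Finset.sum_congr rfl
  intro j _
  have hcard : (Nat.bitIndices j).toFinset.card = pc j := by
    rw [pc, List.toFinset_card_of_nodup Nat.bitIndices_sorted.nodup]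
  rw [hcard]
  unfold wf
  norm_num


/-- Lemma 3.1(2): if `d ≥ 4`, `c ≤ 2^d`, `𝓗` is a hereditary family with
`|𝓗| ≥ 2^d − c` and at least `d + 1` vertices are non-isolated in `𝓗`, then
`∑_{H ∈ 𝓗} 1/(|H| + 1) ≥ W(2^d − c) + 1/6`. -/
theorem weight_lemma_many_vertices {α : Type*} [DecidableEq α] (d c : ℕ)
    (hd : 4 ≤ d) (hc : c ≤ 2 ^ d) (V : Finset α)
    (𝓗 : Finset (Finset α)) (h𝓗 : 𝓗 ⊆ V.powerset) (hher : Hereditary 𝓗)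
    (hcard : 2 ^ d - c ≤ 𝓗.card)
    (hvert : d + 1 ≤ (V.filter fun v => ∃ H ∈ 𝓗, v ∈ H).card) :
    W (2 ^ d - c) + 1 / 6 ≤ ∑ H ∈ 𝓗, (1 : ℝ) / (H.card + 1) := by
  have hfw : ∑ H ∈ 𝓗, (1 : ℝ) / (H.card + 1) = fweight 1 𝓗 := by
    unfold fweight wf
    apply Finset.sum_congr rfl
    intro H _
    norm_num
  rw [W_eq, hfw]
  set n := (𝓗.sup id).card with hn
  have hnd : d + 1 ≤ n := by
    have hsub : (V.filter fun v => ∃ H ∈ 𝓗, v ∈ H) ⊆ 𝓗.sup id := by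
      intro v hv
      rw [Finset.mem_filter] at hv
      exact mem_supp.2 hv.2
    exact le_trans hvert (Finset.card_le_card hsub)
  by_cases hcase : 𝓗.card ≤ 2 ^ (n - 1)
  · have hD := lemD 𝓗.card 𝓗 hher (by omega) hcase le_rfl
    have hmono := ws_mono 1 le_rfl hcard
    linarith
  · push_neg at hcase
    have hdn : 2 ^ d ≤ 2 ^ (n - 1) := Nat.pow_le_pow_right (by norm_num) (by omega)
    have h1 : 2 ^ d + 1 ≤ 𝓗.card := by omega
    have hA := lemA_s14 𝓗.card 𝓗 1 hher le_rfl le_rfl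
    have h2 : ws 1 (2 ^ d + 1) = ws 1 (2 ^ d) + wf 1 1 := by
      rw [ws_succ, pc_two_pow]
    have h3 : ws 1 (2 ^ d - c) ≤ ws 1 (2 ^ d) := ws_mono 1 le_rfl (by omega)
    have h4 : ws 1 (2 ^ d + 1) ≤ ws 1 𝓗.card := ws_mono 1 le_rfl h1
    have h5 : wf 1 1 = 1/2 := wf_num.2.1
    linarith
end

section
/- Let d, c be natural numbers, let V be a finite set with |V| = d, and let 𝓗 be a hereditary family of subsets of V with |𝓗| ≤ 2^d − c − 1. Then at least d − c vertices v ∈ V have degree at most 2^{d−1} − c − 1 in 𝓗. -/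
open Finset

lemma card_powerset_filter_mem {α : Type*} [DecidableEq α] (V : Finset α) (v : α) (hv : v ∈ V) :
    (V.powerset.filter fun S => v ∈ S).card = 2 ^ (V.card - 1) := by
  have himg : V.powerset.filter (fun S => v ∈ S)
      = (V.erase v).powerset.image (insert v ·) := by
    ext S
    simp only [mem_filter, mem_powerset, mem_image]
    constructor
    · rintro ⟨hS, hvS⟩
      exact ⟨S.erase v, fun x hx => mem_erase.2 ⟨(mem_erase.1 hx).1, hS (mem_erase.1 hx).2⟩,
        insert_erase hvS⟩
    · rintro ⟨T, hT, rfl⟩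
      refine ⟨insert_subset hv (hT.trans (erase_subset _ _)), mem_insert_self _ _⟩
  rw [himg, card_image_of_injOn, card_powerset, card_erase_of_mem hv]
  intro T hT T' hT' h
  simp only [coe_powerset, Set.mem_preimage, Set.mem_powerset_iff] at hT hT'
  have hvT : v ∉ T := fun h' => (mem_erase.1 (hT h')).1 rfl
  have hvT' : v ∉ T' := fun h' => (mem_erase.1 (hT' h')).1 rfl
  have := congrArg (fun S => Finset.erase S v) h
  simpa [erase_insert hvT, erase_insert hvT'] using this

/-- Lemma 3.2(1): if `𝓗` is a hereditary family on a `d`-set `V` with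
`|𝓗| ≤ 2^d − c − 1`, then at least `d − c` vertices of `V` have degree at most
`2^{d−1} − c − 1` in `𝓗`. -/
theorem local_lemma_low_degrees {α : Type*} [DecidableEq α] (d c : ℕ)
    (V : Finset α) (hV : V.card = d)
    (𝓗 : Finset (Finset α)) (h𝓗 : 𝓗 ⊆ V.powerset) (hher : Hereditary 𝓗)
    (hcard : (𝓗.card : ℤ) ≤ 2 ^ d - c - 1) :
    (d : ℤ) - c ≤
      ((V.filter fun v =>
        ((𝓗.filter fun H => v ∈ H).card : ℤ) ≤ 2 ^ (d - 1) - c - 1).card : ℤ) := by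
  classical
  by_cases hdc : d ≤ c
  · have h0 : (d : ℤ) - c ≤ 0 := by
      have : (d : ℤ) ≤ c := by exact_mod_cast hdc
      omega
    exact h0.trans (by positivity)
  push_neg at hdc
  set 𝓜 := V.powerset \ 𝓗 with h𝓜
  have hHle : 𝓗.card ≤ 2 ^ d := by
    calc 𝓗.card ≤ V.powerset.card := card_le_card h𝓗
    _ = 2 ^ d := by rw [card_powerset, hV]
  have hMcard : 𝓜.card = 2 ^ d - 𝓗.card := by
    rw [h𝓜, card_sdiff_of_subset h𝓗, card_powerset, hV]
  have hcardN : 𝓗.card + (c + 1) ≤ 2 ^ d := by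
    have : (𝓗.card : ℤ) + (c + 1) ≤ 2 ^ d := by omega
    exact_mod_cast this
  have hMge : c + 1 ≤ 𝓜.card := by omega
  -- upward closedness
  have hup : ∀ M ∈ 𝓜, ∀ M', M ⊆ M' → M' ⊆ V → M' ∈ 𝓜 := by
    intro M hM M' h1 h2
    rw [h𝓜, mem_sdiff] at hM ⊢
    exact ⟨mem_powerset.2 h2, fun hM' => hM.2 (hher M' hM' M h1)⟩
  have hVmem : V ∈ 𝓜 := by
    obtain ⟨M, hM⟩ := card_pos.1 (by omega : 0 < 𝓜.card)
    exact hup M hM V (mem_powerset.1 (mem_sdiff.1 hM).1) subset_rfl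
  -- key degree relation
  have hkey : ∀ v ∈ V, (𝓗.filter fun H => v ∈ H).card
      + (𝓜.filter fun M => v ∈ M).card = 2 ^ (d - 1) := by
    intro v hv
    have hdisj : Disjoint (𝓗.filter fun H => v ∈ H) (𝓜.filter fun M => v ∈ M) :=
      disjoint_filter_filter sdiff_disjoint.symm
    rw [← card_union_of_disjoint hdisj, ← filter_union, h𝓜, union_sdiff_of_subset h𝓗,
      card_powerset_filter_mem V v hv, hV]
  -- every vertex with at most c missing-sets exists in 𝓜 missing it
  have hexists : ∀ u ∈ V, (𝓜.filter fun M => u ∈ M).card ≤ c → ∃ M ∈ 𝓜, u ∉ M := by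
    intro u _ hu
    by_contra h
    push_neg at h
    have heq : 𝓜.filter (fun M => u ∈ M) = 𝓜 := filter_true_of_mem h
    have : (𝓜.filter fun M => u ∈ M).card = 𝓜.card := by rw [heq]
    omega
  set G := V.filter fun v =>
      ((𝓗.filter fun H => v ∈ H).card : ℤ) ≤ 2 ^ (d - 1) - c - 1 with hG
  set B := V.filter fun v =>
      ¬ ((𝓗.filter fun H => v ∈ H).card : ℤ) ≤ 2 ^ (d - 1) - c - 1 with hB
  have hGB : G.card + B.card = d := by
    rw [hG, hB, card_filter_add_card_filter_not, hV]
  -- badness means few missing sets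
  have hbad : ∀ v ∈ B, (𝓜.filter fun M => v ∈ M).card ≤ c := by
    intro v hv
    rw [hB, mem_filter] at hv
    have hk := hkey v hv.1
    have hk' : ((𝓗.filter fun H => v ∈ H).card : ℤ)
        + ((𝓜.filter fun M => v ∈ M).card : ℤ) = 2 ^ (d - 1) := by exact_mod_cast hk
    have := hv.2
    omega
  have hBc : B.card ≤ c := by
    by_contra hBc
    push_neg at hBc
    obtain ⟨v, hv⟩ := card_pos.1 (by omega : 0 < B.card)
    have hvV : v ∈ V := (mem_filter.1 hv).1
    have hmv : (𝓜.filter fun M => v ∈ M).card ≤ c := hbad v hv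
    set T := insert V ((B.erase v).image fun u => V.erase u) with hT
    have hTsub : T ⊆ 𝓜.filter fun M => v ∈ M := by
      intro S hS
      rw [hT, mem_insert] at hS
      rcases hS with rfl | hS
      · exact mem_filter.2 ⟨hVmem, hvV⟩
      · obtain ⟨u, hu, rfl⟩ := mem_image.1 hS
        have huv : u ≠ v := (mem_erase.1 hu).1
        have huB : u ∈ B := (mem_erase.1 hu).2
        have huV : u ∈ V := (mem_filter.1 huB).1
        obtain ⟨M, hM, huM⟩ := hexists u huV (hbad u huB)
        have hMV : M ⊆ V := mem_powerset.1 (mem_sdiff.1 hM).1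
        have : V.erase u ∈ 𝓜 :=
          hup M hM (V.erase u) (subset_erase.2 ⟨hMV, huM⟩) (erase_subset _ _)
        exact mem_filter.2 ⟨this, mem_erase.2 ⟨huv.symm, hvV⟩⟩
    have hinj : Set.InjOn (fun u => V.erase u) (B.erase v) := by
      intro a ha b hb h
      by_contra hab
      have haV : a ∈ V := (mem_filter.1 (mem_erase.1 ha).2).1
      have : a ∈ V.erase b := mem_erase.2 ⟨hab, haV⟩
      have h' : V.erase a = V.erase b := h
      rw [← h'] at this
      exact (mem_erase.1 this).1 rfl
    have hVnot : V ∉ (B.erase v).image fun u => V.erase u := by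
      intro hVin
      obtain ⟨u, hu, h⟩ := mem_image.1 hVin
      have huV : u ∈ V := (mem_filter.1 (mem_erase.1 hu).2).1
      have h' : V.erase u = V := h
      rw [← h'] at huV
      exact (mem_erase.1 huV).1 rfl
    have hTcard : T.card = 1 + (B.card - 1) := by
      rw [hT, card_insert_of_notMem hVnot, card_image_of_injOn hinj,
        card_erase_of_mem hv]
      omega
    have hle : T.card ≤ (𝓜.filter fun M => v ∈ M).card := card_le_card hTsub
    omega
  have hGle : G.card ≤ V.card := card_le_card (filter_subset _ _)
  have : ((V.filter fun v =>
      ((𝓗.filter fun H => v ∈ H).card : ℤ) ≤ 2 ^ (d - 1) - c - 1).card : ℤ) = (G.card : ℤ) := by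
    rw [hG]
  rw [this]
  omega
end

section
/- Let d ≥ 5 be a natural number and let 𝓕 = {S ⊆ [d] : |S| ≤ d − 2}. Then |𝓕| = 2^d − d − 1, every vertex of [d] has degree 2^{d−1} − d in 𝓕, and for every x ∈ [d] one has |𝓕_x| < |𝓕| − (2^{d−1} − d − 1). In particular, m(d, 2^{d−1} − (d+1)) ≤ 2^d − (d+2). -/
lemma countA (s : Finset ℕ) (m : ℕ) (hs : s.card = m) (hm : 2 ≤ m) :
    (s.powerset.filter fun S => S.card ≤ m - 2).card = 2 ^ m - m - 1 := by
  have key : (s.powerset.filter fun S => ¬ S.card ≤ m - 2) =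
      s.powersetCard (m - 1) ∪ {s} := by
    ext S
    simp only [Finset.mem_filter, Finset.mem_powerset, Finset.mem_union,
      Finset.mem_powersetCard, Finset.mem_singleton]
    constructor
    · rintro ⟨hsub, hc⟩
      have hle : S.card ≤ m := hs ▸ Finset.card_le_card hsub
      rcases (by omega : S.card = m - 1 ∨ S.card = m) with h | h
      · exact Or.inl ⟨hsub, h⟩
      · exact Or.inr (Finset.eq_of_subset_of_card_le hsub (by omega))
    · rintro (⟨hsub, hc⟩ | rfl)
      · exact ⟨hsub, by omega⟩
      · exact ⟨Finset.Subset.refl _, by omega⟩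
  have hdisj : Disjoint (s.powersetCard (m - 1)) ({s} : Finset (Finset ℕ)) := by
    simp only [Finset.disjoint_singleton_right, Finset.mem_powersetCard]
    rintro ⟨-, hc⟩
    omega
  have hcards : (s.powersetCard (m - 1) ∪ {s}).card = m + 1 := by
    rw [Finset.card_union_of_disjoint hdisj, Finset.card_powersetCard,
      Finset.card_singleton, hs,
      show m.choose (m - 1) = m.choose 1 from Nat.choose_symm (by omega),
      Nat.choose_one_right]
  have total := Finset.card_filter_add_card_filter_not
    (s := s.powerset) (p := fun S => S.card ≤ m - 2)
  rw [key, hcards, Finset.card_powerset, hs] at total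
  have h2 : m + 1 ≤ 2 ^ m := Nat.lt_two_pow_self (n := m)
  omega

lemma countB (s : Finset ℕ) (m : ℕ) (hs : s.card = m) (hm : 1 ≤ m) :
    (s.powerset.filter fun S => S.card ≤ m - 1).card = 2 ^ m - 1 := by
  have key : (s.powerset.filter fun S => ¬ S.card ≤ m - 1) = {s} := by
    ext S
    simp only [Finset.mem_filter, Finset.mem_powerset, Finset.mem_singleton]
    constructor
    · rintro ⟨hsub, hc⟩
      have hle : S.card ≤ m := hs ▸ Finset.card_le_card hsub
      exact Finset.eq_of_subset_of_card_le hsub (by omega)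
    · rintro rfl
      exact ⟨Finset.Subset.refl _, by omega⟩
  have total := Finset.card_filter_add_card_filter_not
    (s := s.powerset) (p := fun S => S.card ≤ m - 1)
  rw [key, Finset.card_singleton, Finset.card_powerset, hs] at total
  have h2 : 1 ≤ 2 ^ m := Nat.one_le_two_pow
  omega

/-- For `d ≥ 5`, the family `𝓕 = {S ⊆ [d] : |S| ≤ d − 2}` has `2^d − d − 1` edges, every
vertex of `[d]` has degree `2^{d−1} − d` in it, and every `x ∈ [d]` satisfies
`|𝓕_x| < |𝓕| − (2^{d−1} − d − 1)`. -/
theorem nonlocal_small_construction (d : ℕ) (hd : 5 ≤ d)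
    (𝓕 : Finset (Finset ℕ))
    (h𝓕 : 𝓕 = (Finset.Icc 1 d).powerset.filter fun S => S.card ≤ d - 2) :
    𝓕.card = 2 ^ d - d - 1 ∧
    (∀ x ∈ Finset.Icc 1 d, (𝓕.filter fun F => x ∈ F).card = 2 ^ (d - 1) - d) ∧
    (∀ x ∈ Finset.Icc 1 d,
      ((traceAt 𝓕 x).card : ℤ) < (𝓕.card : ℤ) - ((2 : ℤ) ^ (d - 1) - d - 1)) := by
  have hcardI : (Finset.Icc 1 d).card = d := by
    rw [Nat.card_Icc]; omega
  have h1 : 𝓕.card = 2 ^ d - d - 1 := by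
    rw [h𝓕]; exact countA _ d hcardI (by omega)
  refine ⟨h1, ?_, ?_⟩
  · -- degrees
    intro x hx
    have hcard' : ((Finset.Icc 1 d).erase x).card = d - 1 := by
      rw [Finset.card_erase_of_mem hx, hcardI]
    have hbij : (𝓕.filter fun F => x ∈ F).card =
        (((Finset.Icc 1 d).erase x).powerset.filter
          fun S => S.card ≤ (d - 1) - 2).card := by
      refine Finset.card_bij' (fun S _ => S.erase x) (fun T _ => insert x T) ?_ ?_ ?_ ?_
      · intro S hS
        rw [h𝓕] at hS
        simp only [Finset.mem_filter, Finset.mem_powerset] at hS ⊢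
        obtain ⟨⟨hsub, hc⟩, hxS⟩ := hS
        constructor
        · exact Finset.erase_subset_erase _ hsub
        · rw [Finset.card_erase_of_mem hxS]; omega
      · intro T hT
        simp only [Finset.mem_filter, Finset.mem_powerset] at hT
        obtain ⟨hsub, hc⟩ := hT
        have hxT : x ∉ T := fun hxT => (Finset.mem_erase.mp (hsub hxT)).1 rfl
        rw [h𝓕]
        simp only [Finset.mem_filter, Finset.mem_powerset]
        refine ⟨⟨?_, ?_⟩, Finset.mem_insert_self _ _⟩
        · exact Finset.insert_subset hx (hsub.trans (Finset.erase_subset _ _))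
        · rw [Finset.card_insert_of_notMem hxT]; omega
      · intro S hS
        rw [h𝓕] at hS
        simp only [Finset.mem_filter] at hS
        exact Finset.insert_erase hS.2
      · intro T hT
        simp only [Finset.mem_filter, Finset.mem_powerset] at hT
        have hxT : x ∉ T := fun hxT => (Finset.mem_erase.mp (hT.1 hxT)).1 rfl
        exact Finset.erase_insert hxT
    rw [hbij, countA _ (d - 1) hcard' (by omega)]
    have : 2 ^ d = 2 * 2 ^ (d - 1) := by
      rw [← pow_succ']
      congr 1
      omega
    omega
  · -- traces
    intro x hx
    have hcard' : ((Finset.Icc 1 d).erase x).card = d - 1 := by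
      rw [Finset.card_erase_of_mem hx, hcardI]
    have htr : traceAt 𝓕 x =
        ((Finset.Icc 1 d).erase x).powerset.filter fun S => S.card ≤ (d - 1) - 1 := by
      ext T
      simp only [traceAt, Finset.mem_image, Finset.mem_filter, Finset.mem_powerset]
      constructor
      · rintro ⟨S, hS, rfl⟩
        rw [h𝓕] at hS
        simp only [Finset.mem_filter, Finset.mem_powerset] at hS
        refine ⟨Finset.erase_subset_erase _ hS.1, ?_⟩
        have := Finset.card_erase_le (s := S) (a := x)
        omega
      · rintro ⟨hsub, hc⟩
        have hxT : x ∉ T := fun hxT => (Finset.mem_erase.mp (hsub hxT)).1 rfl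
        refine ⟨T, ?_, Finset.erase_eq_of_notMem hxT⟩
        rw [h𝓕]
        simp only [Finset.mem_filter, Finset.mem_powerset]
        exact ⟨hsub.trans (Finset.erase_subset _ _), by omega⟩
    have h2 : (traceAt 𝓕 x).card = 2 ^ (d - 1) - 1 := by
      rw [htr]; exact countB _ (d - 1) hcard' (by omega)
    rw [h1, h2]
    have hpow : ((2 : ℤ) ^ (d - 1)) = ((2 ^ (d - 1) : ℕ) : ℤ) := by push_cast; ring
    rw [hpow]
    have hdd : 2 ^ d = 2 * 2 ^ (d - 1) := by
      rw [← pow_succ']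
      congr 1
      omega
    have hge : d + 1 ≤ 2 ^ d := Nat.lt_two_pow_self (n := d)
    have hge1 : 1 ≤ 2 ^ (d - 1) := Nat.one_le_two_pow
    omega
end
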